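/- Causal equals bicausal in two steps under stochastic ordering: Let N = 2 and c(x₁,x₂,y₁,y₂) = c₁(x₁,y₁) + |x₂ − y₂| with c₁ lower semicontinuous and bounded from below. Suppose that for every z ∈ ℝ and every y₁, one of the following holds: F_{μ^{x₁}}(z) ≥ F_{ν^{y₁}}(z) for all x₁, or F_{μ^{x₁}}(z) ≤ F_{ν^{y₁}}(z) for all x₁. Then inf_{γ ∈ Π_c(μ,ν)} ∫ c dγ = inf_{γ ∈ Π_bc(μ,ν)} ∫ c dγ. -/

import Mathlib

open MeasureTheory ProbabilityTheory Set Filter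
open scoped ENNReal NNReal BoundedContinuousFunction

noncomputable section

namespace CausalTransport

/-- The path space of a real-valued process in `N` time steps. -/
abbrev Path (N : ℕ) := Fin N → ℝ

/-- Truncation of a path to its first `t` coordinates. -/
def proj (N t : ℕ) (x : Path N) : Fin t → ℝ :=
  fun i => if h : (i : ℕ) < N then x ⟨i, h⟩ else 0

/-- The coordinate with (0-based) index `t`, with junk value `0` if `t ≥ N`. -/
def coord (N t : ℕ) (x : Path N) : ℝ := if h : t < N then x ⟨t, h⟩ else 0

/-- The coordinates of a path after time `t`. -/
def tailProj (N t : ℕ) (x : Path N) : Fin (N - t) → ℝ := fun i => coord N (t + i) x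

/-- Extension of a history of length `t` by one further value. -/
def snocFun (t : ℕ) (xs : Fin t → ℝ) (r : ℝ) : Fin (t + 1) → ℝ :=
  fun i => if h : (i : ℕ) < t then xs ⟨i, h⟩ else r

/-- Extension of a history of length `t` to a full path (by `0`). -/
def pad (N t : ℕ) (xs : Fin t → ℝ) : Path N :=
  fun i => if h : (i : ℕ) < t then xs ⟨i, h⟩ else 0

/-- Glue the first `t` coordinates of `x` with the later coordinates `z`. -/
def glue (N t : ℕ) (x : Path N) (z : Fin (N - t) → ℝ) : Path N :=
  fun i => if (i : ℕ) < t then x i else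
    if h : (i : ℕ) - t < N - t then z ⟨(i : ℕ) - t, h⟩ else 0

/-- Truncation of a pair of paths to the first `t` coordinates of each. -/
def pairProj (N t : ℕ) (p : Path N × Path N) : (Fin t → ℝ) × (Fin t → ℝ) :=
  (proj N t p.1, proj N t p.2)

/-- The σ-algebra on path space generated by the first `t` coordinates. -/
def filt (N t : ℕ) : MeasurableSpace (Path N) :=
  MeasurableSpace.comap (proj N t) inferInstance

/-- `γ` is a transport plan (coupling) between `μ` and `ν`. -/
def IsCoupling {α β : Type*} [MeasurableSpace α] [MeasurableSpace β]
    (μ : Measure α) (ν : Measure β) (γ : Measure (α × β)) : Prop :=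
  γ.map Prod.fst = μ ∧ γ.map Prod.snd = ν

/-- `γ` is a causal transport plan between `μ` and `ν`: it is a coupling and, for any
disintegration `K` of `γ` over its first coordinate and any `t ∈ {1,…,N}`, the map
`x ↦ K x B` is measurable for the σ-algebra of the first `t` coordinates (up to `μ`-null
sets) whenever `B` is measurable for the first `t` coordinates. -/
def IsCausal (N : ℕ) (μ ν : Measure (Path N)) (γ : Measure (Path N × Path N)) : Prop :=
  IsCoupling μ ν γ ∧
  ∀ K : Kernel (Path N) (Path N), IsSFiniteKernel K → μ ⊗ₘ K = γ →
    ∀ t : ℕ, 1 ≤ t → t ≤ N → ∀ B : Set (Path N), MeasurableSet[filt N t] B →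
      ∃ g : Path N → ℝ≥0∞, Measurable[filt N t] g ∧ (fun x => K x B) =ᵐ[μ] g

/-- `γ` is a bicausal transport plan between `μ` and `ν`. -/
def IsBicausal (N : ℕ) (μ ν : Measure (Path N)) (γ : Measure (Path N × Path N)) : Prop :=
  IsCausal N μ ν γ ∧ IsCausal N ν μ (γ.map Prod.swap)

/-- Regular conditional distribution, under `μ`, of the coordinate of index `t`
given the first `t` coordinates. -/
def nextK (N : ℕ) (μ : Measure (Path N)) [IsFiniteMeasure μ] (t : ℕ) :
    Kernel (Fin t → ℝ) ℝ :=
  (μ.map (fun x => (proj N t x, coord N t x))).condKernel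

/-- Regular conditional distribution, under `μ`, of all the coordinates after time `t`
given the first `t` coordinates. -/
def tailK (N : ℕ) (μ : Measure (Path N)) [IsFiniteMeasure μ] (t : ℕ) :
    Kernel (Fin t → ℝ) (Fin (N - t) → ℝ) :=
  (μ.map (fun x => (proj N t x, tailProj N t x))).condKernel

/-- Regular conditional distribution, under `γ`, of the pair of coordinates of index `t`
given the first `t` coordinates of both paths. -/
def stepK (N : ℕ) (γ : Measure (Path N × Path N)) [IsFiniteMeasure γ] (t : ℕ) :
    Kernel ((Fin t → ℝ) × (Fin t → ℝ)) (ℝ × ℝ) :=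
  (γ.map (fun p => (pairProj N t p, (coord N t p.1, coord N t p.2)))).condKernel

/-- Regular conditional distribution, under `μ`, of the coordinate of index `t` given the
single coordinate of index `t-1` (one-step Markov transition kernel). -/
def mstep (N : ℕ) (μ : Measure (Path N)) [IsFiniteMeasure μ] (t : ℕ) : Kernel ℝ ℝ :=
  (μ.map (fun x => (coord N (t - 1) x, coord N t x))).condKernel

/-- `μ` is a Markov measure. -/
def IsMarkovMeasure (N : ℕ) (μ : Measure (Path N)) [IsFiniteMeasure μ] : Prop :=
  ∀ (t : ℕ) (ht : 1 ≤ t) (_ : t < N),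
    ∀ᵐ xs ∂(μ.map (proj N t)), nextK N μ t xs = mstep N μ t (xs ⟨t - 1, by omega⟩)

/-- A causal plan is causal quasi-Markov if (every version of) the conditional law of
`(x_{t+1}, y_{t+1})` given `(x_1,…,x_t,y_1,…,y_t)` depends a.s. only on `(x_t, y_1,…,y_t)`. -/
def IsQuasiMarkov (N : ℕ) (γ : Measure (Path N × Path N)) : Prop :=
  ∀ (t : ℕ) (ht : 1 ≤ t) (_ : t < N),
    ∀ S : Kernel ((Fin t → ℝ) × (Fin t → ℝ)) (ℝ × ℝ), IsSFiniteKernel S →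
      (γ.map (pairProj N t)) ⊗ₘ S
          = γ.map (fun p => (pairProj N t p, (coord N t p.1, coord N t p.2))) →
      ∃ κ : Kernel (ℝ × (Fin t → ℝ)) (ℝ × ℝ),
        ∀ᵐ z ∂(γ.map (pairProj N t)), S z = κ (z.1 ⟨t - 1, by omega⟩, z.2)

/-- Topological support of a measure. -/
def msupport {α : Type*} [TopologicalSpace α] [MeasurableSpace α] (μ : Measure α) : Set α :=
  {x | ∀ U : Set α, IsOpen U → x ∈ U → μ U ≠ 0}

/-- `K` is a version of the disintegration of `μ` at time `t` which is weakly continuous on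
the support of the first `t` coordinates of `μ`. -/
def WeaklyContinuousDisintegration (N t : ℕ) (μ : Measure (Path N))
    (K : Kernel (Fin t → ℝ) (Fin (N - t) → ℝ)) : Prop :=
  IsMarkovKernel K ∧
  (μ.map (proj N t)) ⊗ₘ K = μ.map (fun x => (proj N t x, tailProj N t x)) ∧
  ∀ f : (Fin (N - t) → ℝ) →ᵇ ℝ,
    ContinuousOn (fun xs => ∫ z, f z ∂(K xs)) (msupport (μ.map (proj N t)))

/-- `μ` is successively weakly continuous. -/
def SuccWeakCont (N : ℕ) (μ : Measure (Path N)) : Prop :=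
  ∀ t : ℕ, t < N → ∃ K : Kernel (Fin t → ℝ) (Fin (N - t) → ℝ),
    WeaklyContinuousDisintegration N t μ K

/-- The cumulative distribution function of a measure on `ℝ`. -/
def cdf1 (η : Measure ℝ) (z : ℝ) : ℝ := (η (Iic z)).toReal

/-- The left-continuous generalized inverse (quantile function) of the c.d.f. of `η`. -/
def qinv (η : Measure ℝ) (u : ℝ) : ℝ := sInf {y : ℝ | u ≤ cdf1 η y}

/-- Partial Knothe–Rosenblatt path built from the "uniform" inputs `u`. -/
def krPartial (N : ℕ) (μ : Measure (Path N)) [IsFiniteMeasure μ] (u : ℕ → ℝ) :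
    (t : ℕ) → Fin t → ℝ
  | 0 => Fin.elim0
  | t + 1 => snocFun t (krPartial N μ u t)
      (qinv (nextK N μ t (krPartial N μ u t)) (u t))

/-- The Knothe–Rosenblatt (quantile transform) path built from uniform inputs. -/
def krPath (N : ℕ) (μ : Measure (Path N)) [IsFiniteMeasure μ] (u : Path N) : Path N :=
  krPartial N μ (fun n => if h : n < N then u ⟨n, h⟩ else 0) N

/-- The uniform distribution on `[0,1]`. -/
def unif01 : Measure ℝ := volume.restrict (Icc (0 : ℝ) 1)

instance : IsProbabilityMeasure unif01 := by
  constructor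
  simp [unif01, Real.volume_Icc]

/-- N independent uniforms on `[0,1]`. -/
def uniformCube (N : ℕ) : Measure (Path N) := Measure.pi fun _ => unif01

instance (N : ℕ) : IsProbabilityMeasure (uniformCube N) :=
  inferInstanceAs (IsProbabilityMeasure (Measure.pi fun _ : Fin N => unif01))

/-- The (increasing) Knothe–Rosenblatt rearrangement of `(μ, ν)`: the joint law of
`(X*, Y*)` where both paths are built from the same independent uniforms. -/
def krCoupling (N : ℕ) (μ ν : Measure (Path N)) [IsFiniteMeasure μ] [IsFiniteMeasure ν] :
    Measure (Path N × Path N) :=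
  (uniformCube N).map (fun u => (krPath N μ u, krPath N ν u))

/-- Partial Knothe–Rosenblatt Monge map. -/
def krMapPartial (N : ℕ) (μ ν : Measure (Path N)) [IsFiniteMeasure μ] [IsFiniteMeasure ν]
    (x : Path N) : (t : ℕ) → Fin t → ℝ
  | 0 => Fin.elim0
  | t + 1 => snocFun t (krMapPartial N μ ν x t)
      (qinv (nextK N ν t (krMapPartial N μ ν x t))
        (cdf1 (nextK N μ t (proj N t x)) (coord N t x)))

/-- The Knothe–Rosenblatt Monge map from `μ` to `ν`. -/
def krMap (N : ℕ) (μ ν : Measure (Path N)) [IsFiniteMeasure μ] [IsFiniteMeasure ν]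
    (x : Path N) : Path N :=
  krMapPartial N μ ν x N

open Classical in
/-- Relative entropy `Ent(ν|μ)`, via the nonnegative integrand `f log f - f + 1`,
`f = dν/dμ`; equals `∫ log (dν/dμ) dν` for probability measures. -/
def relEnt {α : Type*} [MeasurableSpace α] (ν μ : Measure α) : ℝ≥0∞ :=
  if ν ≪ μ then
    ∫⁻ x, ENNReal.ofReal
      ((ν.rnDeriv μ x).toReal * Real.log (ν.rnDeriv μ x).toReal
        - (ν.rnDeriv μ x).toReal + 1) ∂μ
  else ∞

/-- Universally measurable `ℝ≥0∞`-valued function. -/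
def UnivMeasurable {α : Type*} [MeasurableSpace α] (f : α → ℝ≥0∞) : Prop :=
  ∀ P : Measure α, IsFiniteMeasure P → AEMeasurable f P

section Basic

lemma measurable_proj (N t : ℕ) : Measurable (proj N t) := by
  apply measurable_pi_lambda
  intro i
  by_cases h : (i : ℕ) < N
  · simpa [proj, h] using measurable_pi_apply _
  · simpa [proj, h] using measurable_const

lemma measurable_coord (N t : ℕ) : Measurable (coord N t) := by
  by_cases h : t < N
  · have e : coord N t = fun x => x ⟨t, h⟩ := by funext x; simp [coord, h]
    rw [e]; exact measurable_pi_apply _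
  · have e : coord N t = fun _ => 0 := by funext x; simp [coord, h]
    rw [e]; exact measurable_const

lemma measurable_pad (N t : ℕ) : Measurable (pad N t) := by
  apply measurable_pi_lambda
  intro i
  by_cases h : (i : ℕ) < t
  · simpa [pad, h] using measurable_pi_apply _
  · simpa [pad, h] using measurable_const

lemma measurable_snocFun (t : ℕ) :
    Measurable (fun p : (Fin t → ℝ) × ℝ => snocFun t p.1 p.2) := by
  apply measurable_pi_lambda
  intro i
  by_cases h : (i : ℕ) < t
  · simp [snocFun, h]; exact (measurable_pi_apply _).comp measurable_fst
  · simpa [snocFun, h] using measurable_snd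

lemma proj21_apply (x : Path 2) (i : Fin 1) : proj 2 1 x i = x 0 := by
  have hi : (i : ℕ) = 0 := by omega
  simp [proj, hi]

lemma coord21 (x : Path 2) : coord 2 1 x = x 1 := by
  simp [coord]

lemma coord20 (x : Path 2) : coord 2 0 x = x 0 := by
  simp [coord]

lemma proj_snocFun (h : Fin 1 → ℝ) (r : ℝ) : proj 2 1 (snocFun 1 h r) = h := by
  funext i
  have hi : i = 0 := Subsingleton.elim _ _
  subst hi
  simp [proj, snocFun]

lemma coord_snocFun (h : Fin 1 → ℝ) (r : ℝ) : coord 2 1 (snocFun 1 h r) = r := by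
  simp [coord, snocFun]

lemma snocFun_proj_coord (x : Path 2) : snocFun 1 (proj 2 1 x) (coord 2 1 x) = x := by
  funext i
  fin_cases i
  · simp [snocFun, proj21_apply]
  · simp [snocFun, coord21]

lemma proj_pad (h : Fin 1 → ℝ) : proj 2 1 (pad 2 1 h) = h := by
  funext i
  have hi : i = 0 := Subsingleton.elim _ _
  subst hi
  simp [proj, pad]

/-- The identification of two-step path space with (history, last coordinate). -/
def E2 : Path 2 ≃ᵐ (Fin 1 → ℝ) × ℝ where
  toFun x := (proj 2 1 x, coord 2 1 x)
  invFun p := snocFun 1 p.1 p.2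
  left_inv x := snocFun_proj_coord x
  right_inv p := by
    show (proj 2 1 (snocFun 1 p.1 p.2), coord 2 1 (snocFun 1 p.1 p.2)) = p
    rw [proj_snocFun, coord_snocFun]
  measurable_toFun := (measurable_proj 2 1).prodMk (measurable_coord 2 1)
  measurable_invFun := measurable_snocFun 1

@[simp] lemma E2_apply (x : Path 2) : E2 x = (proj 2 1 x, coord 2 1 x) := rfl
@[simp] lemma E2_symm_apply (p : (Fin 1 → ℝ) × ℝ) : E2.symm p = snocFun 1 p.1 p.2 := rfl

lemma proj22_eq_id : proj 2 2 = id := by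
  funext x i
  have hi : (i : ℕ) < 2 := i.isLt
  simp only [proj, hi, dif_pos, id]

lemma filt_le (N t : ℕ) : filt N t ≤ (inferInstance : MeasurableSpace (Path N)) :=
  (measurable_proj N t).comap_le

lemma filt22_eq : filt 2 2 = (inferInstance : MeasurableSpace (Path 2)) := by
  rw [filt, proj22_eq_id, MeasurableSpace.comap_id]

lemma measurable_filt_proj : Measurable[filt 2 1] (proj 2 1) :=
  Measurable.of_comap_le le_rfl

lemma factor_of_filt {g : Path 2 → ℝ≥0∞} (hg : Measurable[filt 2 1] g) :
    ∃ G : (Fin 1 → ℝ) → ℝ≥0∞, Measurable G ∧ ∀ x, g x = G (proj 2 1 x) := by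
  refine ⟨g ∘ pad 2 1, (hg.mono (filt_le 2 1) le_rfl).comp (measurable_pad 2 1), fun x => ?_⟩
  obtain ⟨S, _, hS2⟩ := hg (measurableSet_singleton (g x))
  have hx : x ∈ proj 2 1 ⁻¹' S := by
    rw [hS2]; exact rfl
  have : pad 2 1 (proj 2 1 x) ∈ proj 2 1 ⁻¹' S := by
    simpa [proj_pad] using hx
  rw [hS2] at this
  exact this.symm

end Basic

section Dist

/-- `|a - b|` for `ℝ≥0∞`. -/
def nnd (a b : ℝ≥0∞) : ℝ≥0∞ := (a - b) + (b - a)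

lemma nnd_le {a b c : ℝ≥0∞} (h1 : a - b ≤ c) (h2 : b - a ≤ c) : nnd a b ≤ c := by
  rcases le_total a b with h | h
  · rw [nnd, tsub_eq_zero_of_le h, zero_add]; exact h2
  · rw [nnd, tsub_eq_zero_of_le h, add_zero]; exact h1

lemma nnd_of_le {a b : ℝ≥0∞} (h : b ≤ a) : nnd a b = a - b := by
  rw [nnd, tsub_eq_zero_of_le h, add_zero]

lemma nnd_of_ge {a b : ℝ≥0∞} (h : a ≤ b) : nnd a b = b - a := by
  rw [nnd, tsub_eq_zero_of_le h, zero_add]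

lemma nnd_toReal {a b : ℝ≥0∞} (ha : a ≠ ⊤) (hb : b ≠ ⊤) :
    nnd a b = ENNReal.ofReal |a.toReal - b.toReal| := by
  rcases le_total a b with h | h
  · rw [nnd_of_ge h, abs_of_nonpos (by simp [ENNReal.toReal_mono hb h]), neg_sub,
      ← ENNReal.toReal_sub_of_le h hb, ENNReal.ofReal_toReal (by simp [hb])]
  · rw [nnd_of_le h, abs_of_nonneg (by simp [ENNReal.toReal_mono ha h]),
      ← ENNReal.toReal_sub_of_le h ha, ENNReal.ofReal_toReal (by simp [ha])]

lemma xorSet_eq_Ico (a b : ℝ) : {z : ℝ | ¬ (a ≤ z ↔ b ≤ z)} = Ico (min a b) (max a b) := by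
  ext z
  simp only [mem_setOf_eq, mem_Ico, min_le_iff, lt_max_iff]
  by_cases ha : a ≤ z <;> by_cases hb : b ≤ z
  · simp [ha, hb, not_lt.2 ha, not_lt.2 hb]
  · simp [ha, hb, not_lt.2 ha, lt_of_not_ge hb]
  · simp [ha, hb, not_lt.2 hb, lt_of_not_ge ha]
  · simp [ha, hb, lt_of_not_ge ha, lt_of_not_ge hb]

lemma ofReal_abs_eq_volume (a b : ℝ) :
    ENNReal.ofReal |a - b| = volume {z : ℝ | ¬ (a ≤ z ↔ b ≤ z)} := by
  rw [xorSet_eq_Ico, Real.volume_Ico, max_sub_min_eq_abs, abs_sub_comm]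

lemma xorSet_u (a b : ℝ) : {u : ℝ | ¬ (u ≤ a ↔ u ≤ b)} = Ioc (min a b) (max a b) := by
  ext u
  simp only [mem_setOf_eq, mem_Ioc, min_lt_iff, le_max_iff]
  by_cases ha : u ≤ a <;> by_cases hb : u ≤ b
  · simp [ha, hb, not_lt.2 ha, not_lt.2 hb]
  · simp [ha, hb, lt_of_not_ge hb]
  · simp [ha, hb, lt_of_not_ge ha]
  · simp [ha, hb, lt_of_not_ge ha, lt_of_not_ge hb]

lemma measurableSet_xor {Ω : Type*} [MeasurableSpace Ω] {f g : Ω → ℝ}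
    (hf : Measurable f) (hg : Measurable g) :
    MeasurableSet {p : Ω × ℝ | ¬ (f p.1 ≤ p.2 ↔ g p.1 ≤ p.2)} := by
  have h1 : MeasurableSet {p : Ω × ℝ | f p.1 ≤ p.2} :=
    measurableSet_le (hf.comp measurable_fst) measurable_snd
  have h2 : MeasurableSet {p : Ω × ℝ | g p.1 ≤ p.2} :=
    measurableSet_le (hg.comp measurable_fst) measurable_snd
  have : {p : Ω × ℝ | ¬ (f p.1 ≤ p.2 ↔ g p.1 ≤ p.2)}
      = ({p : Ω × ℝ | f p.1 ≤ p.2} \ {p | g p.1 ≤ p.2}) ∪ ({p | g p.1 ≤ p.2} \ {p | f p.1 ≤ p.2}) := by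
    ext p; by_cases h1 : f p.1 ≤ p.2 <;> by_cases h2 : g p.1 ≤ p.2 <;> simp [h1, h2]
  rw [this]
  exact (h1.diff h2).union (h2.diff h1)

lemma lintegral_abs_eq {Ω : Type*} [MeasurableSpace Ω] (π : Measure Ω) [SFinite π]
    {f g : Ω → ℝ} (hf : Measurable f) (hg : Measurable g) :
    ∫⁻ ω, ENNReal.ofReal |f ω - g ω| ∂π
      = ∫⁻ z, π {ω | ¬ (f ω ≤ z ↔ g ω ≤ z)} ∂volume := by
  have hxor := measurableSet_xor hf hg
  calc ∫⁻ ω, ENNReal.ofReal |f ω - g ω| ∂π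
      = ∫⁻ ω, ∫⁻ z, {p : Ω × ℝ | ¬ (f p.1 ≤ p.2 ↔ g p.1 ≤ p.2)}.indicator 1 (ω, z) ∂volume ∂π := by
        refine lintegral_congr fun ω => ?_
        rw [ofReal_abs_eq_volume]
        rw [← lintegral_indicator_one (by rw [xorSet_eq_Ico]; exact measurableSet_Ico)]
        refine lintegral_congr fun z => ?_
        by_cases h : ¬ (f ω ≤ z ↔ g ω ≤ z) <;> simp [h, indicator_apply]
    _ = ∫⁻ z, ∫⁻ ω, {p : Ω × ℝ | ¬ (f p.1 ≤ p.2 ↔ g p.1 ≤ p.2)}.indicator 1 (ω, z) ∂π ∂volume := by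
        apply lintegral_lintegral_swap
        exact ((measurable_indicator_const_iff 1).mpr hxor).aemeasurable
    _ = ∫⁻ z, π {ω | ¬ (f ω ≤ z ↔ g ω ≤ z)} ∂volume := by
        refine lintegral_congr fun z => ?_
        rw [← lintegral_indicator_one]
        · refine lintegral_congr fun ω => ?_
          by_cases h : ¬ (f ω ≤ z ↔ g ω ≤ z) <;> simp [h, indicator_apply]
        · have h : Measurable fun ω : Ω => (ω, z) := measurable_id.prodMk measurable_const
          simpa using h hxor

lemma nnd_measure_le {Ω : Type*} [MeasurableSpace Ω] (π : Measure Ω)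
    {f g : Ω → ℝ} (z : ℝ) :
    nnd (π {ω | f ω ≤ z}) (π {ω | g ω ≤ z}) ≤ π {ω | ¬ (f ω ≤ z ↔ g ω ≤ z)} := by
  apply nnd_le
  · rw [tsub_le_iff_right]
    refine le_trans (measure_mono ?_) (measure_union_le _ _)
    intro ω hω
    by_cases h : g ω ≤ z
    · exact Or.inr h
    · exact Or.inl (by simp only [mem_setOf_eq]; tauto)
  · rw [tsub_le_iff_right]
    refine le_trans (measure_mono ?_) (measure_union_le _ _)
    intro ω hω
    by_cases h : f ω ≤ z
    · exact Or.inr h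
    · exact Or.inl (by simp only [mem_setOf_eq]; tauto)

lemma lintegral_tsub_ge {α : Type*} [MeasurableSpace α] (μ : Measure α) {f g : α → ℝ≥0∞}
    (hg : Measurable g) :
    ∫⁻ a, f a ∂μ - ∫⁻ a, g a ∂μ ≤ ∫⁻ a, f a - g a ∂μ := by
  rw [tsub_le_iff_right]
  calc ∫⁻ a, f a ∂μ ≤ ∫⁻ a, (f a - g a) + g a ∂μ := lintegral_mono fun a => le_tsub_add
    _ = (∫⁻ a, f a - g a ∂μ) + ∫⁻ a, g a ∂μ := lintegral_add_right _ hg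

end Dist

section Quantile

variable (η ρ : Measure ℝ) [IsProbabilityMeasure η] [IsProbabilityMeasure ρ]

lemma cdf1_eq_cdf (z : ℝ) : cdf1 η z = cdf η z := (cdf_eq_real η z).symm

lemma ofReal_cdf1 (z : ℝ) : ENNReal.ofReal (cdf1 η z) = η (Iic z) := by
  rw [cdf1_eq_cdf, ofReal_cdf]

lemma cdf1_nonneg (z : ℝ) : 0 ≤ cdf1 η z := ENNReal.toReal_nonneg

lemma cdf1_le_one (z : ℝ) : cdf1 η z ≤ 1 := by
  rw [cdf1_eq_cdf]; exact cdf_le_one η z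

lemma cdf1_mono : Monotone (cdf1 η) := by
  have h : cdf1 η = fun z => cdf η z := funext fun z => cdf1_eq_cdf η z
  rw [h]; exact monotone_cdf η

lemma qinv_bddBelow {u : ℝ} (h0 : 0 < u) : BddBelow {y : ℝ | u ≤ cdf1 η y} := by
  have h := (tendsto_cdf_atBot η).eventually_le_const h0
  obtain ⟨y0, hy0⟩ := eventually_atBot.1 (h.and ((tendsto_cdf_atBot η).eventually_lt_const h0))
  refine ⟨y0, fun y hy => ?_⟩
  by_contra hc
  push_neg at hc
  have := (hy0 y hc.le).2
  rw [← cdf1_eq_cdf] at this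
  exact absurd hy (not_le.2 this)

lemma qinv_set_nonempty {u : ℝ} (h1 : u < 1) : {y : ℝ | u ≤ cdf1 η y}.Nonempty := by
  have h := (tendsto_cdf_atTop η).eventually_const_le h1
  obtain ⟨y, hy⟩ := h.exists
  exact ⟨y, by rw [mem_setOf_eq, cdf1_eq_cdf]; exact hy⟩

lemma le_cdf1_qinv {u : ℝ} (h0 : 0 < u) (h1 : u < 1) : u ≤ cdf1 η (qinv η u) := by
  have hbdd := qinv_bddBelow η h0
  have hne := qinv_set_nonempty η h1
  have hgt : ∀ y, qinv η u < y → u ≤ cdf1 η y := by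
    intro y hy
    obtain ⟨s, hsS, hs⟩ := exists_lt_of_csInf_lt hne hy
    exact le_trans hsS (cdf1_mono η hs.le)
  have hrc : ContinuousWithinAt (cdf η) (Ioi (qinv η u)) (qinv η u) :=
    ((cdf η).right_continuous (qinv η u)).mono Ioi_subset_Ici_self
  rw [cdf1_eq_cdf]
  refine ge_of_tendsto hrc ?_
  filter_upwards [self_mem_nhdsWithin] with y hy
  rw [← cdf1_eq_cdf]
  exact hgt y hy

lemma qinv_le_iff {u z : ℝ} (h0 : 0 < u) (h1 : u < 1) : qinv η u ≤ z ↔ u ≤ cdf1 η z := by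
  constructor
  · intro h
    exact le_trans (le_cdf1_qinv η h0 h1) (cdf1_mono η h)
  · intro h
    exact csInf_le (qinv_bddBelow η h0) h

/-- Measurable version of the quantile transform. -/
def Qf (η : Measure ℝ) (u : ℝ) : ℝ := if 0 < u ∧ u < 1 then qinv η u else 0

lemma measurable_Qf_kernel {W : Type*} [MeasurableSpace W] (κ : Kernel W ℝ) [IsMarkovKernel κ] :
    Measurable fun w : W × ℝ => Qf (κ w.1) w.2 := by
  apply measurable_of_Iic; intro z
  have heq : (fun w : W × ℝ => Qf (κ w.1) w.2) ⁻¹' Iic z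
      = ({w : W × ℝ | 0 < w.2 ∧ w.2 < 1} ∩ {w | w.2 ≤ cdf1 (κ w.1) z})
        ∪ ({w : W × ℝ | 0 < w.2 ∧ w.2 < 1}ᶜ ∩ {w | (0:ℝ) ≤ z}) := by
    ext w
    simp only [mem_preimage, mem_Iic, mem_union, mem_inter_iff, mem_setOf_eq, mem_compl_iff, Qf]
    by_cases h : 0 < w.2 ∧ w.2 < 1
    · rw [if_pos h, qinv_le_iff _ h.1 h.2]; tauto
    · rw [if_neg h]; tauto
  rw [heq]
  have hm : Measurable fun w : W × ℝ => cdf1 (κ w.1) z :=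
    ENNReal.measurable_toReal.comp ((Kernel.measurable_coe κ measurableSet_Iic).comp measurable_fst)
  have h1 : MeasurableSet {w : W × ℝ | 0 < w.2 ∧ w.2 < 1} :=
    (measurableSet_lt measurable_const measurable_snd).inter
      (measurableSet_lt measurable_snd measurable_const)
  exact ((h1.inter (measurableSet_le measurable_snd hm)).union
    (h1.compl.inter (by by_cases hz : (0:ℝ) ≤ z <;> simp [hz])))

lemma measurable_Qf : Measurable (Qf η) := by
  have h := measurable_Qf_kernel (Kernel.const Unit η)
  have h2 : Qf η = (fun w : Unit × ℝ => Qf ((Kernel.const Unit η) w.1) w.2)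
      ∘ (fun u : ℝ => ((), u)) := by
    funext u; simp [Kernel.const_apply]
  rw [h2]
  exact h.comp (measurable_const.prodMk measurable_id)

lemma unif01_apply_inter_Ioo {A : Set ℝ} (hA : MeasurableSet A) :
    unif01 A = volume (A ∩ Ioo 0 1) := by
  rw [unif01, Measure.restrict_apply hA]
  have hsub : Ioo (0:ℝ) 1 ⊆ Icc 0 1 := Ioo_subset_Icc_self
  have hsplit : A ∩ Icc (0:ℝ) 1 = (A ∩ Ioo 0 1) ∪ (A ∩ (Icc 0 1 \ Ioo 0 1)) := by
    rw [← inter_union_distrib_left, union_diff_cancel hsub]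
  rw [hsplit]
  have h0 : volume (A ∩ (Icc (0:ℝ) 1 \ Ioo 0 1)) = 0 := by
    refine measure_mono_null
      (inter_subset_right.trans (Icc_diff_Ioo_same (by norm_num : (0:ℝ) ≤ 1)).subset)
      (((countable_singleton (1:ℝ)).insert 0).measure_zero _)
  exact le_antisymm ((measure_union_le _ _).trans (by rw [h0, add_zero]))
    (measure_mono subset_union_left)

lemma volume_Ioo01_inter_Iic {c : ℝ} (h0 : 0 ≤ c) (h1 : c ≤ 1) :
    volume (Ioo 0 1 ∩ Iic c) = ENNReal.ofReal c := by
  apply le_antisymm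
  · calc volume (Ioo 0 1 ∩ Iic c) ≤ volume (Ioc 0 c) :=
          measure_mono (fun u hu => ⟨hu.1.1, hu.2⟩)
      _ = ENNReal.ofReal c := by rw [Real.volume_Ioc, sub_zero]
  · calc ENNReal.ofReal c = volume (Ioo (0:ℝ) c) := by rw [Real.volume_Ioo, sub_zero]
      _ ≤ volume (Ioo 0 1 ∩ Iic c) :=
          measure_mono (fun u hu => ⟨⟨hu.1, lt_of_lt_of_le hu.2 h1⟩, hu.2.le⟩)

lemma volume_Ioo01_inter_Ioc {m M : ℝ} (h0 : 0 ≤ m) (hmM : m ≤ M) (h1 : M ≤ 1) :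
    volume (Ioo 0 1 ∩ Ioc m M) = ENNReal.ofReal (M - m) := by
  apply le_antisymm
  · refine le_trans (measure_mono inter_subset_right) (le_of_eq (Real.volume_Ioc))
  · calc ENNReal.ofReal (M - m) = volume (Ioo m M) := (Real.volume_Ioo).symm
      _ ≤ volume (Ioo 0 1 ∩ Ioc m M) :=
          measure_mono (fun u hu => ⟨⟨lt_of_le_of_lt h0 hu.1, lt_of_lt_of_le hu.2 h1⟩, hu.1, hu.2.le⟩)

lemma map_Qf : unif01.map (Qf η) = η := by
  refine Measure.ext_of_Iic _ _ (fun z => ?_)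
  rw [Measure.map_apply (measurable_Qf η) measurableSet_Iic]
  rw [unif01_apply_inter_Ioo ((measurable_Qf η) measurableSet_Iic)]
  have hpre : Qf η ⁻¹' Iic z ∩ Ioo 0 1 = Ioo 0 1 ∩ Iic (cdf1 η z) := by
    ext u
    simp only [mem_inter_iff, mem_preimage, mem_Iic, mem_Ioo, Qf]
    constructor
    · rintro ⟨hq, h0, h1⟩
      rw [if_pos ⟨h0, h1⟩, qinv_le_iff η h0 h1] at hq
      exact ⟨⟨h0, h1⟩, hq⟩
    · rintro ⟨⟨h0, h1⟩, hc⟩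
      refine ⟨?_, h0, h1⟩
      rw [if_pos ⟨h0, h1⟩, qinv_le_iff η h0 h1]
      exact hc
  rw [hpre, volume_Ioo01_inter_Iic (cdf1_nonneg η z) (cdf1_le_one η z), ofReal_cdf1]

lemma measurableSet_xor' {Ω : Type*} [MeasurableSpace Ω] {f g : Ω → ℝ}
    (hf : Measurable f) (hg : Measurable g) (z : ℝ) :
    MeasurableSet {ω | ¬ (f ω ≤ z ↔ g ω ≤ z)} := by
  have h1 : MeasurableSet {ω | f ω ≤ z} := measurableSet_le hf measurable_const
  have h2 : MeasurableSet {ω | g ω ≤ z} := measurableSet_le hg measurable_const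
  have he : {ω | ¬ (f ω ≤ z ↔ g ω ≤ z)}
      = ({ω | f ω ≤ z} \ {ω | g ω ≤ z}) ∪ ({ω | g ω ≤ z} \ {ω | f ω ≤ z}) := by
    ext ω; by_cases ha : f ω ≤ z <;> by_cases hb : g ω ≤ z <;> simp [ha, hb]
  rw [he]
  exact (h1.diff h2).union (h2.diff h1)

lemma lint_abs_Qf :
    ∫⁻ u, ENNReal.ofReal |Qf η u - Qf ρ u| ∂unif01
      = ∫⁻ z, nnd (η (Iic z)) (ρ (Iic z)) ∂volume := by
  rw [lintegral_abs_eq unif01 (measurable_Qf η) (measurable_Qf ρ)]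
  refine lintegral_congr fun z => ?_
  set a := cdf1 η z with ha
  set b := cdf1 ρ z with hb
  rw [unif01_apply_inter_Ioo (measurableSet_xor' (measurable_Qf η) (measurable_Qf ρ) z)]
  have hset : {u | ¬ (Qf η u ≤ z ↔ Qf ρ u ≤ z)} ∩ Ioo 0 1
      = Ioo 0 1 ∩ Ioc (min a b) (max a b) := by
    ext u
    simp only [mem_inter_iff, mem_setOf_eq, mem_Ioo]
    constructor
    · rintro ⟨hx, h0, h1⟩
      rw [Qf, if_pos ⟨h0, h1⟩, Qf, if_pos ⟨h0, h1⟩,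
        qinv_le_iff η h0 h1, qinv_le_iff ρ h0 h1] at hx
      have : u ∈ ({u : ℝ | ¬ (u ≤ a ↔ u ≤ b)}) := hx
      rw [xorSet_u] at this
      exact ⟨⟨h0, h1⟩, this⟩
    · rintro ⟨⟨h0, h1⟩, hm⟩
      have hx : u ∈ ({u : ℝ | ¬ (u ≤ a ↔ u ≤ b)}) := by rw [xorSet_u]; exact hm
      refine ⟨?_, h0, h1⟩
      rw [Qf, if_pos ⟨h0, h1⟩, Qf, if_pos ⟨h0, h1⟩,
        qinv_le_iff η h0 h1, qinv_le_iff ρ h0 h1]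
      exact hx
  rw [hset, volume_Ioo01_inter_Ioc (le_min (cdf1_nonneg η z) (cdf1_nonneg ρ z))
    min_le_max (max_le (cdf1_le_one η z) (cdf1_le_one ρ z))]
  rw [nnd_toReal (measure_ne_top η _) (measure_ne_top ρ _)]
  rw [max_sub_min_eq_abs, abs_sub_comm]
  rfl

end Quantile

section Rect

lemma ae_eq_of_forall_rect {W₁ W₂ : Type*} [MeasurableSpace W₁] [MeasurableSpace W₂]
    (σ : Measure (W₁ × W₂)) [IsFiniteMeasure σ] {f g : W₁ × W₂ → ℝ≥0∞}
    (hf : Measurable f) (hg : Measurable g) (hfb : ∀ p, f p ≤ 1) (hgb : ∀ p, g p ≤ 1)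
    (h : ∀ A B, MeasurableSet A → MeasurableSet B →
      ∫⁻ p in A ×ˢ B, f p ∂σ = ∫⁻ p in A ×ˢ B, g p ∂σ) : f =ᵐ[σ] g := by
  have hfin : ∀ {u : W₁ × W₂ → ℝ≥0∞}, (∀ p, u p ≤ 1) → Measurable u →
      IsFiniteMeasure (σ.withDensity u) := by
    intro u hub hum
    constructor
    rw [withDensity_apply _ MeasurableSet.univ, Measure.restrict_univ]
    calc ∫⁻ p, u p ∂σ ≤ ∫⁻ _, 1 ∂σ := lintegral_mono hub
      _ = σ univ := lintegral_one
      _ < ⊤ := measure_lt_top σ univ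
  have hwd : σ.withDensity f = σ.withDensity g := by
    haveI := hfin hfb hf
    haveI := hfin hgb hg
    refine ext_of_generate_finite _ generateFrom_prod.symm isPiSystem_prod ?_ ?_
    · rintro s hs
      obtain ⟨A, hA, B, hB, rfl⟩ := hs
      rw [withDensity_apply _ (hA.prod hB), withDensity_apply _ (hA.prod hB)]
      exact h A B hA hB
    · rw [withDensity_apply _ MeasurableSet.univ, withDensity_apply _ MeasurableSet.univ,
        ← univ_prod_univ]
      exact h univ univ MeasurableSet.univ MeasurableSet.univ
  refine ae_eq_of_forall_setLIntegral_eq_of_sigmaFinite hf hg (fun s hs _ => ?_)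
  rw [← withDensity_apply _ hs, ← withDensity_apply _ hs, hwd]

end Rect

section Disint

variable (μ : Measure (Path 2)) [IsProbabilityMeasure μ]

instance : IsProbabilityMeasure (μ.map (fun x => (proj 2 1 x, coord 2 1 x))) :=
  Measure.isProbabilityMeasure_map ((measurable_proj 2 1).prodMk (measurable_coord 2 1)).aemeasurable

lemma markov_nextK : IsMarkovKernel (nextK 2 μ 1) := by
  unfold nextK
  infer_instance

lemma map_E2_eq : μ.map E2 = (μ.map (proj 2 1)) ⊗ₘ nextK 2 μ 1 := by
  have hco : ⇑E2 = fun x => (proj 2 1 x, coord 2 1 x) := rfl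
  have h1 : (μ.map (fun x => (proj 2 1 x, coord 2 1 x))).fst = μ.map (proj 2 1) :=
    Measure.fst_map_prodMk (measurable_coord 2 1)
  rw [hco, ← h1]
  exact ((μ.map (fun x => (proj 2 1 x, coord 2 1 x))).disintegrate (μ.map (fun x => (proj 2 1 x, coord 2 1 x))).condKernel).symm

lemma hist_eq (h : Fin 1 → ℝ) : ![h 0] = h := by
  funext i
  have : i = 0 := Subsingleton.elim _ _
  subst this
  simp

end Disint

section Constr

/-- The representation of the quantile-coupling construction on split coordinates. -/
def constrRep (σ : Measure ((Fin 1 → ℝ) × (Fin 1 → ℝ))) (κX κY : Kernel (Fin 1 → ℝ) ℝ) :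
    Measure (((Fin 1 → ℝ) × ℝ) × ((Fin 1 → ℝ) × ℝ)) :=
  (σ.prod unif01).map
    (fun w => ((w.1.1, Qf (κX w.1.1) w.2), (w.1.2, Qf (κY w.1.2) w.2)))

/-- The quantile (Knothe--Rosenblatt-type) coupling built from a first-coordinate coupling `σ`
and transition kernels. -/
def constr (σ : Measure ((Fin 1 → ℝ) × (Fin 1 → ℝ))) (κX κY : Kernel (Fin 1 → ℝ) ℝ) :
    Measure (Path 2 × Path 2) :=
  (constrRep σ κX κY).map (E2.symm.prodCongr E2.symm)

variable (σ : Measure ((Fin 1 → ℝ) × (Fin 1 → ℝ))) [IsProbabilityMeasure σ]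
variable (κX κY : Kernel (Fin 1 → ℝ) ℝ) [IsMarkovKernel κX] [IsMarkovKernel κY]

lemma measurable_psi :
    Measurable (fun w : ((Fin 1 → ℝ) × (Fin 1 → ℝ)) × ℝ =>
      ((w.1.1, Qf (κX w.1.1) w.2), (w.1.2, Qf (κY w.1.2) w.2))) := by
  have h1 : Measurable (fun w : ((Fin 1 → ℝ) × (Fin 1 → ℝ)) × ℝ => Qf (κX w.1.1) w.2) :=
    (measurable_Qf_kernel κX).comp ((measurable_fst.fst).prodMk measurable_snd)
  have h2 : Measurable (fun w : ((Fin 1 → ℝ) × (Fin 1 → ℝ)) × ℝ => Qf (κY w.1.2) w.2) :=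
    (measurable_Qf_kernel κY).comp ((measurable_fst.snd).prodMk measurable_snd)
  exact ((measurable_fst.fst.prodMk h1).prodMk (measurable_fst.snd.prodMk h2))

lemma map_constr_side {G : Type*} [MeasurableSpace G] (ρ : Measure G) [IsProbabilityMeasure ρ]
    (φ : G → (Fin 1 → ℝ)) (hφ : Measurable φ) (κ : Kernel (Fin 1 → ℝ) ℝ) [IsMarkovKernel κ] :
    (ρ.prod unif01).map (fun w : G × ℝ => (φ w.1, Qf (κ (φ w.1)) w.2)) = (ρ.map φ) ⊗ₘ κ := by
  have hQm : Measurable (fun w : G × ℝ => (φ w.1, Qf (κ (φ w.1)) w.2)) :=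
    (hφ.comp measurable_fst).prodMk
      ((measurable_Qf_kernel κ).comp ((hφ.comp measurable_fst).prodMk measurable_snd))
  haveI : IsProbabilityMeasure (ρ.map φ) := Measure.isProbabilityMeasure_map hφ.aemeasurable
  refine ext_of_generate_finite _ generateFrom_prod.symm isPiSystem_prod ?_ ?_
  · rintro s hs
    obtain ⟨A, hA, B, hB, rfl⟩ := hs
    simp only [mem_setOf_eq] at hA hB
    rw [Measure.map_apply hQm (hA.prod hB), Measure.compProd_apply_prod hA hB,
      setLIntegral_map hA (Kernel.measurable_coe κ hB) hφ,
      Measure.prod_apply (hQm (hA.prod hB)), ← lintegral_indicator (hφ hA)]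
    refine lintegral_congr fun g => ?_
    by_cases hg : φ g ∈ A
    · have hslice : (Prod.mk g ⁻¹' ((fun w : G × ℝ => (φ w.1, Qf (κ (φ w.1)) w.2)) ⁻¹' (A ×ˢ B)))
          = Qf (κ (φ g)) ⁻¹' B := by
        ext u
        simp [hg]
      rw [hslice, indicator_of_mem (show g ∈ φ ⁻¹' A from hg),
        ← Measure.map_apply (measurable_Qf (κ (φ g))) hB, map_Qf (κ (φ g))]
    · have hslice : (Prod.mk g ⁻¹' ((fun w : G × ℝ => (φ w.1, Qf (κ (φ w.1)) w.2)) ⁻¹' (A ×ˢ B)))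
          = (∅ : Set ℝ) := by
        ext u
        simp [hg]
      rw [hslice, indicator_of_notMem (show g ∉ φ ⁻¹' A from hg)]
      simp
  · rw [Measure.map_apply hQm MeasurableSet.univ]
    simp

lemma constrRep_fst : (constrRep σ κX κY).map Prod.fst = (σ.map Prod.fst) ⊗ₘ κX := by
  rw [constrRep, Measure.map_map measurable_fst (measurable_psi κX κY)]
  exact map_constr_side σ Prod.fst measurable_fst κX

lemma constrRep_snd : (constrRep σ κX κY).map Prod.snd = (σ.map Prod.snd) ⊗ₘ κY := by
  rw [constrRep, Measure.map_map measurable_snd (measurable_psi κX κY)]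
  exact map_constr_side σ Prod.snd measurable_snd κY

lemma constrRep_swap :
    (constrRep σ κX κY).map Prod.swap = constrRep (σ.map Prod.swap) κY κX := by
  have h2 : ((σ.map Prod.swap).prod unif01) = (σ.prod unif01).map (Prod.map Prod.swap id) := by
    conv_lhs => rw [← Measure.map_id (μ := unif01)]
    exact Measure.map_prod_map _ _ measurable_swap measurable_id
  rw [constrRep, Measure.map_map measurable_swap (measurable_psi κX κY), constrRep, h2,
    Measure.map_map (measurable_psi κY κX) (measurable_swap.prodMap measurable_id)]
  rfl

lemma constr_swap :
    (constr σ κX κY).map Prod.swap = constr (σ.map Prod.swap) κY κX := by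
  rw [constr, Measure.map_map measurable_swap (E2.symm.prodCongr E2.symm).measurable, constr,
    ← constrRep_swap σ κX κY,
    Measure.map_map (E2.symm.prodCongr E2.symm).measurable measurable_swap]
  rfl

end Constr

section ConstrCausal

lemma snocFun_zero (h : Fin 1 → ℝ) (r : ℝ) : snocFun 1 h r 0 = h 0 := by
  simp [snocFun]

lemma snocFun_one (h : Fin 1 → ℝ) (r : ℝ) : snocFun 1 h r 1 = r := by
  simp [snocFun]

variable (μ ν : Measure (Path 2)) [IsProbabilityMeasure μ] [IsProbabilityMeasure ν]
variable (σ : Measure ((Fin 1 → ℝ) × (Fin 1 → ℝ))) [IsProbabilityMeasure σ]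
variable (κX κY : Kernel (Fin 1 → ℝ) ℝ) [IsMarkovKernel κX] [IsMarkovKernel κY]

lemma constr_map_fst (hσ1 : σ.map Prod.fst = μ.map (proj 2 1))
    (hμ : μ.map E2 = (μ.map (proj 2 1)) ⊗ₘ κX) :
    (constr σ κX κY).map Prod.fst = μ := by
  rw [constr, Measure.map_map measurable_fst (E2.symm.prodCongr E2.symm).measurable]
  have hfun : (Prod.fst ∘ (E2.symm.prodCongr E2.symm)) = (⇑E2.symm) ∘ Prod.fst := rfl
  rw [hfun, ← Measure.map_map E2.symm.measurable measurable_fst, constrRep_fst σ κX κY, hσ1,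
    ← hμ, MeasurableEquiv.map_symm_map]

lemma constr_map_snd (hσ2 : σ.map Prod.snd = ν.map (proj 2 1))
    (hν : ν.map E2 = (ν.map (proj 2 1)) ⊗ₘ κY) :
    (constr σ κX κY).map Prod.snd = ν := by
  rw [constr, Measure.map_map measurable_snd (E2.symm.prodCongr E2.symm).measurable]
  have hfun : (Prod.snd ∘ (E2.symm.prodCongr E2.symm)) = (⇑E2.symm) ∘ Prod.snd := rfl
  rw [hfun, ← Measure.map_map E2.symm.measurable measurable_snd, constrRep_snd σ κX κY, hσ2,
    ← hν, MeasurableEquiv.map_symm_map]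

lemma constr_rect (hσ1 : σ.map Prod.fst = μ.map (proj 2 1))
    (hμ : μ.map E2 = (μ.map (proj 2 1)) ⊗ₘ κX)
    {C : Set (Path 2)} (hC : MeasurableSet C)
    {A : Set (Fin 1 → ℝ)} (hA : MeasurableSet A) :
    (constr σ κX κY) (C ×ˢ (proj 2 1 ⁻¹' A))
      = ∫⁻ x in C, σ.condKernel (proj 2 1 x) A ∂μ := by
  set C' : Set ((Fin 1 → ℝ) × ℝ) := (⇑E2.symm) ⁻¹' C with hC'def
  have hC' : MeasurableSet C' := E2.symm.measurable hC
  have hpreB : (⇑E2.symm) ⁻¹' (proj 2 1 ⁻¹' A) = Prod.fst ⁻¹' A := by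
    ext p
    simp only [mem_preimage, E2_symm_apply, proj_snocFun]
  have hf : Measurable (fun h : Fin 1 → ℝ => κX h (Prod.mk h ⁻¹' C')) :=
    Kernel.measurable_kernel_prodMk_left hC'
  -- LHS
  have hLHS : (constr σ κX κY) (C ×ˢ (proj 2 1 ⁻¹' A))
      = ∫⁻ p, (univ ×ˢ A).indicator (fun q : (Fin 1 → ℝ) × (Fin 1 → ℝ)
          => κX q.1 (Prod.mk q.1 ⁻¹' C')) p ∂σ := by
    rw [constr, Measure.map_apply (E2.symm.prodCongr E2.symm).measurable
      (hC.prod ((measurable_proj 2 1) hA))]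
    have hEE : (⇑(E2.symm.prodCongr E2.symm)) ⁻¹' (C ×ˢ (proj 2 1 ⁻¹' A))
        = C' ×ˢ (Prod.fst ⁻¹' A) := by
      rw [← hpreB]
      rfl
    rw [hEE, constrRep, Measure.map_apply (measurable_psi κX κY) (hC'.prod (measurable_fst hA)),
      Measure.prod_apply ((measurable_psi κX κY) (hC'.prod (measurable_fst hA)))]
    refine lintegral_congr fun q => ?_
    by_cases hq : q.2 ∈ A
    · have hsl : (Prod.mk q ⁻¹' ((fun w : ((Fin 1 → ℝ) × (Fin 1 → ℝ)) × ℝ =>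
          ((w.1.1, Qf (κX w.1.1) w.2), (w.1.2, Qf (κY w.1.2) w.2))) ⁻¹' (C' ×ˢ (Prod.fst ⁻¹' A))))
          = Qf (κX q.1) ⁻¹' (Prod.mk q.1 ⁻¹' C') := by
        ext u
        simp [hq]
      rw [hsl, indicator_of_mem (show q ∈ univ ×ˢ A from ⟨trivial, hq⟩),
        ← Measure.map_apply (measurable_Qf (κX q.1)) (measurable_prodMk_left hC'),
        map_Qf (κX q.1)]
    · have hsl : (Prod.mk q ⁻¹' ((fun w : ((Fin 1 → ℝ) × (Fin 1 → ℝ)) × ℝ =>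
          ((w.1.1, Qf (κX w.1.1) w.2), (w.1.2, Qf (κY w.1.2) w.2))) ⁻¹' (C' ×ˢ (Prod.fst ⁻¹' A))))
          = (∅ : Set ℝ) := by
        ext u
        simp [hq]
      rw [hsl, indicator_of_notMem (fun hmem => hq hmem.2)]
      simp
  rw [hLHS]
  -- use the disintegration of σ
  have hσdis : σ.fst ⊗ₘ σ.condKernel = σ := σ.disintegrate σ.condKernel
  have hLHS2 : ∫⁻ p, (univ ×ˢ A).indicator (fun q : (Fin 1 → ℝ) × (Fin 1 → ℝ)
        => κX q.1 (Prod.mk q.1 ⁻¹' C')) p ∂σ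
      = ∫⁻ h, κX h (Prod.mk h ⁻¹' C') * σ.condKernel h A ∂(μ.map (proj 2 1)) := by
    have hm1 : Measurable (fun q : (Fin 1 → ℝ) × (Fin 1 → ℝ)
        => κX q.1 (Prod.mk q.1 ⁻¹' C')) := hf.comp measurable_fst
    have hm2 : Measurable ((univ ×ˢ A).indicator (fun q : (Fin 1 → ℝ) × (Fin 1 → ℝ)
        => κX q.1 (Prod.mk q.1 ⁻¹' C'))) := hm1.indicator (MeasurableSet.univ.prod hA)
    conv_lhs => rw [← hσdis]
    rw [Measure.lintegral_compProd hm2]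
    have hfst : σ.fst = μ.map (proj 2 1) := hσ1
    rw [hfst]
    refine lintegral_congr fun h => ?_
    have : ∀ h2, (univ ×ˢ A).indicator (fun q : (Fin 1 → ℝ) × (Fin 1 → ℝ)
        => κX q.1 (Prod.mk q.1 ⁻¹' C')) (h, h2)
        = κX h (Prod.mk h ⁻¹' C') * A.indicator (fun _ => 1) h2 := by
      intro h2
      by_cases hh2 : h2 ∈ A
      · rw [indicator_of_mem (show (h, h2) ∈ univ ×ˢ A from ⟨trivial, hh2⟩),
          indicator_of_mem hh2, mul_one]
      · rw [indicator_of_notMem (fun hmem => hh2 hmem.2), indicator_of_notMem hh2, mul_zero]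
    simp_rw [this]
    rw [lintegral_const_mul _ ((measurable_indicator_const_iff 1).mpr hA)]
    congr 1
    rw [lintegral_indicator hA]
    exact setLIntegral_one A
  rw [hLHS2]
  -- RHS
  have hRHS : ∫⁻ x in C, σ.condKernel (proj 2 1 x) A ∂μ
      = ∫⁻ h, σ.condKernel h A * κX h (Prod.mk h ⁻¹' C') ∂(μ.map (proj 2 1)) := by
    rw [← lintegral_indicator hC]
    have hcomp : (fun x => C.indicator (fun x => σ.condKernel (proj 2 1 x) A) x)
        = (fun x => C'.indicator (fun w : (Fin 1 → ℝ) × ℝ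
            => σ.condKernel w.1 A) (E2 x)) := by
      funext x
      by_cases hx : x ∈ C
      · have hx' : E2 x ∈ C' := by
          simp only [hC'def, mem_preimage, MeasurableEquiv.symm_apply_apply]
          exact hx
        simp only [indicator_of_mem hx, indicator_of_mem hx']
        rfl
      · have hx' : E2 x ∉ C' := by
          simp only [hC'def, mem_preimage, MeasurableEquiv.symm_apply_apply]
          exact hx
        simp only [indicator_of_notMem hx, indicator_of_notMem hx']
    have hm1 : Measurable (fun w : (Fin 1 → ℝ) × ℝ => σ.condKernel w.1 A) :=
      (Kernel.measurable_coe σ.condKernel hA).comp measurable_fst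
    have hm2 : Measurable (C'.indicator (fun w : (Fin 1 → ℝ) × ℝ => σ.condKernel w.1 A)) :=
      hm1.indicator hC'
    rw [hcomp, ← lintegral_map hm2 E2.measurable, hμ, Measure.lintegral_compProd hm2]
    refine lintegral_congr fun h => ?_
    have : ∀ r : ℝ, C'.indicator (fun w : (Fin 1 → ℝ) × ℝ => σ.condKernel w.1 A) (h, r)
        = σ.condKernel h A * (Prod.mk h ⁻¹' C').indicator (fun _ => 1) r := by
      intro r
      by_cases hr : (h, r) ∈ C'
      · rw [indicator_of_mem hr, indicator_of_mem (show r ∈ Prod.mk h ⁻¹' C' from hr), mul_one]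
      · rw [indicator_of_notMem hr,
          indicator_of_notMem (show r ∉ Prod.mk h ⁻¹' C' from hr), mul_zero]
    simp_rw [this]
    rw [lintegral_const_mul _ ((measurable_indicator_const_iff 1).mpr
      (measurable_prodMk_left hC'))]
    congr 1
    rw [lintegral_indicator (measurable_prodMk_left hC')]
    exact setLIntegral_one _
  rw [hRHS]
  refine lintegral_congr fun h => ?_
  rw [mul_comm]

lemma isCausal_constr (hσ1 : σ.map Prod.fst = μ.map (proj 2 1))
    (hσ2 : σ.map Prod.snd = ν.map (proj 2 1))
    (hμ : μ.map E2 = (μ.map (proj 2 1)) ⊗ₘ κX)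
    (hν : ν.map E2 = (ν.map (proj 2 1)) ⊗ₘ κY) :
    IsCausal 2 μ ν (constr σ κX κY) := by
  constructor
  · exact ⟨constr_map_fst μ σ κX κY hσ1 hμ, constr_map_snd ν σ κX κY hσ2 hν⟩
  · intro K hKsf hKeq t ht1 ht2 B hB
    have ht : t = 1 ∨ t = 2 := by omega
    rcases ht with ht | ht
    · subst ht
      obtain ⟨A, hA, rfl⟩ := hB
      refine ⟨fun x => σ.condKernel (proj 2 1 x) A, ?_, ?_⟩
      · exact (Kernel.measurable_coe σ.condKernel hA).comp measurable_filt_proj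
      · refine ae_eq_of_forall_setLIntegral_eq_of_sigmaFinite
          (Kernel.measurable_coe K ((measurable_proj 2 1) hA))
          ((Kernel.measurable_coe σ.condKernel hA).comp (measurable_proj 2 1))
          (fun C hC _ => ?_)
        rw [← Measure.compProd_apply_prod hC ((measurable_proj 2 1) hA), hKeq,
          constr_rect μ σ κX κY hσ1 hμ hC hA]
    · subst ht
      rw [filt22_eq] at hB ⊢
      exact ⟨fun x => K x B, Kernel.measurable_coe K hB, EventuallyEq.rfl⟩

lemma isBicausal_constr (hσ1 : σ.map Prod.fst = μ.map (proj 2 1))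
    (hσ2 : σ.map Prod.snd = ν.map (proj 2 1))
    (hμ : μ.map E2 = (μ.map (proj 2 1)) ⊗ₘ κX)
    (hν : ν.map E2 = (ν.map (proj 2 1)) ⊗ₘ κY) :
    IsBicausal 2 μ ν (constr σ κX κY) := by
  constructor
  · exact isCausal_constr μ ν σ κX κY hσ1 hσ2 hμ hν
  · rw [constr_swap]
    haveI : IsProbabilityMeasure (σ.map Prod.swap) :=
      Measure.isProbabilityMeasure_map measurable_swap.aemeasurable
    refine isCausal_constr ν μ (σ.map Prod.swap) κY κX ?_ ?_ hν hμ
    · rw [Measure.map_map measurable_fst measurable_swap]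
      exact hσ2
    · rw [Measure.map_map measurable_snd measurable_swap]
      exact hσ1

lemma constr_cost (c1 : ℝ → ℝ → ℝ≥0∞) (hc1meas : Measurable (fun q : ℝ × ℝ => c1 q.1 q.2)) :
    ∫⁻ p, c1 (p.1 0) (p.2 0) + ENNReal.ofReal |p.1 1 - p.2 1| ∂(constr σ κX κY)
      = ∫⁻ q, c1 (q.1 0) (q.2 0) ∂σ
        + ∫⁻ q, ∫⁻ z, nnd (κX q.1 (Iic z)) (κY q.2 (Iic z)) ∂volume ∂σ := by
  have hpair : Measurable fun p : Path 2 × Path 2 => ((p.1 0 : ℝ), (p.2 0 : ℝ)) :=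
    ((measurable_pi_apply 0).comp measurable_fst).prodMk
      ((measurable_pi_apply 0).comp measurable_snd)
  have h1m : Measurable fun p : Path 2 × Path 2 => c1 (p.1 0) (p.2 0) := hc1meas.comp hpair
  have hsub : Measurable fun p : Path 2 × Path 2 => p.1 1 - p.2 1 :=
    ((measurable_pi_apply 1).comp measurable_fst).sub ((measurable_pi_apply 1).comp measurable_snd)
  have h2m : Measurable fun p : Path 2 × Path 2 => ENNReal.ofReal |p.1 1 - p.2 1| :=
    ENNReal.measurable_ofReal.comp hsub.abs
  have hcost : Measurable (fun p : Path 2 × Path 2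
      => c1 (p.1 0) (p.2 0) + ENNReal.ofReal |p.1 1 - p.2 1|) := h1m.add h2m
  have hEE := (E2.symm.prodCongr E2.symm).measurable
  have hcostE : Measurable fun a : ((Fin 1 → ℝ) × ℝ) × ((Fin 1 → ℝ) × ℝ)
      => c1 (((E2.symm.prodCongr E2.symm) a).1 0) (((E2.symm.prodCongr E2.symm) a).2 0)
        + ENNReal.ofReal |((E2.symm.prodCongr E2.symm) a).1 1
            - ((E2.symm.prodCongr E2.symm) a).2 1| := hcost.comp hEE
  rw [constr, lintegral_map hcost hEE, constrRep, lintegral_map hcostE (measurable_psi κX κY)]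
  have heval : ∀ w : ((Fin 1 → ℝ) × (Fin 1 → ℝ)) × ℝ,
      c1 (((E2.symm.prodCongr E2.symm)
            ((w.1.1, Qf (κX w.1.1) w.2), (w.1.2, Qf (κY w.1.2) w.2))).1 0)
         (((E2.symm.prodCongr E2.symm)
            ((w.1.1, Qf (κX w.1.1) w.2), (w.1.2, Qf (κY w.1.2) w.2))).2 0)
        + ENNReal.ofReal |((E2.symm.prodCongr E2.symm)
            ((w.1.1, Qf (κX w.1.1) w.2), (w.1.2, Qf (κY w.1.2) w.2))).1 1
          - ((E2.symm.prodCongr E2.symm)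
            ((w.1.1, Qf (κX w.1.1) w.2), (w.1.2, Qf (κY w.1.2) w.2))).2 1|
      = c1 (w.1.1 0) (w.1.2 0)
        + ENNReal.ofReal |Qf (κX w.1.1) w.2 - Qf (κY w.1.2) w.2| := by
    intro w
    have e1 : ((E2.symm.prodCongr E2.symm)
        ((w.1.1, Qf (κX w.1.1) w.2), (w.1.2, Qf (κY w.1.2) w.2))).1
        = snocFun 1 w.1.1 (Qf (κX w.1.1) w.2) := rfl
    have e2 : ((E2.symm.prodCongr E2.symm)
        ((w.1.1, Qf (κX w.1.1) w.2), (w.1.2, Qf (κY w.1.2) w.2))).2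
        = snocFun 1 w.1.2 (Qf (κY w.1.2) w.2) := rfl
    rw [e1, e2, snocFun_zero, snocFun_zero, snocFun_one, snocFun_one]
  rw [lintegral_congr heval]
  have hq1 : Measurable fun w : ((Fin 1 → ℝ) × (Fin 1 → ℝ)) × ℝ => Qf (κX w.1.1) w.2 :=
    (measurable_Qf_kernel κX).comp (measurable_fst.fst.prodMk measurable_snd)
  have hq2 : Measurable fun w : ((Fin 1 → ℝ) × (Fin 1 → ℝ)) × ℝ => Qf (κY w.1.2) w.2 :=
    (measurable_Qf_kernel κY).comp (measurable_fst.snd.prodMk measurable_snd)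
  have habs : Measurable fun w : ((Fin 1 → ℝ) × (Fin 1 → ℝ)) × ℝ
      => ENNReal.ofReal |Qf (κX w.1.1) w.2 - Qf (κY w.1.2) w.2| :=
    ENNReal.measurable_ofReal.comp (hq1.sub hq2).abs
  have hpair0 : Measurable fun w : ((Fin 1 → ℝ) × (Fin 1 → ℝ)) × ℝ
      => ((w.1.1 0 : ℝ), (w.1.2 0 : ℝ)) :=
    ((measurable_pi_apply 0).comp measurable_fst.fst).prodMk
      ((measurable_pi_apply 0).comp measurable_fst.snd)
  have hc1' : Measurable fun w : ((Fin 1 → ℝ) × (Fin 1 → ℝ)) × ℝ => c1 (w.1.1 0) (w.1.2 0) :=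
    hc1meas.comp hpair0
  rw [lintegral_add_left hc1']
  congr 1
  · rw [lintegral_prod _ hc1'.aemeasurable]
    refine lintegral_congr fun q => ?_
    simp [lintegral_const]
  · rw [lintegral_prod _ habs.aemeasurable]
    refine lintegral_congr fun q => ?_
    exact lint_abs_Qf (κX q.1) (κY q.2)

end ConstrCausal

section LowerBound

variable (μ ν : Measure (Path 2)) [IsProbabilityMeasure μ] [IsProbabilityMeasure ν]

set_option maxHeartbeats 2000000 in
lemma causal_cost_ge
    (hcdf : ∀ z y1 : ℝ,
      (∀ x1 : ℝ, nextK 2 ν 1 ![y1] (Iic z) ≤ nextK 2 μ 1 ![x1] (Iic z)) ∨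
      (∀ x1 : ℝ, nextK 2 μ 1 ![x1] (Iic z) ≤ nextK 2 ν 1 ![y1] (Iic z)))
    (γ : Measure (Path 2 × Path 2)) (hγ : IsCausal 2 μ ν γ) :
    ∫⁻ q, ∫⁻ z, nnd (nextK 2 μ 1 q.1 (Iic z)) (nextK 2 ν 1 q.2 (Iic z)) ∂volume
        ∂(γ.map (fun p : Path 2 × Path 2 => (proj 2 1 p.1, proj 2 1 p.2)))
      ≤ ∫⁻ p, ENNReal.ofReal |p.1 1 - p.2 1| ∂γ := by
  classical
  haveI : IsProbabilityMeasure γ := by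
    constructor
    rw [← preimage_univ (f := @Prod.fst (Path 2) (Path 2)),
      ← Measure.map_apply measurable_fst MeasurableSet.univ, hγ.1.1, measure_univ]
  haveI hKmX : IsMarkovKernel (nextK 2 μ 1) := markov_nextK μ
  haveI hKmY : IsMarkovKernel (nextK 2 ν 1) := markov_nextK ν
  set κX := nextK 2 μ 1 with hκX
  set κY := nextK 2 ν 1 with hκY
  have hPm : Measurable (fun p : Path 2 × Path 2 => (proj 2 1 p.1, proj 2 1 p.2)) :=
    ((measurable_proj 2 1).comp measurable_fst).prodMk ((measurable_proj 2 1).comp measurable_snd)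
  have hCm : Measurable (fun p : Path 2 × Path 2 => (coord 2 1 p.1, coord 2 1 p.2)) :=
    ((measurable_coord 2 1).comp measurable_fst).prodMk
      ((measurable_coord 2 1).comp measurable_snd)
  have hFm : Measurable (fun p : Path 2 × Path 2
      => ((proj 2 1 p.1, proj 2 1 p.2), (coord 2 1 p.1, coord 2 1 p.2))) := hPm.prodMk hCm
  set γ1 := γ.map (fun p : Path 2 × Path 2 => (proj 2 1 p.1, proj 2 1 p.2)) with hγ1
  set γ2 := γ.map (fun p : Path 2 × Path 2
      => ((proj 2 1 p.1, proj 2 1 p.2), (coord 2 1 p.1, coord 2 1 p.2))) with hγ2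
  haveI : IsProbabilityMeasure γ1 := Measure.isProbabilityMeasure_map hPm.aemeasurable
  haveI : IsProbabilityMeasure γ2 := Measure.isProbabilityMeasure_map hFm.aemeasurable
  have hfst : γ2.fst = γ1 := Measure.fst_map_prodMk hCm
  set Θ := γ2.condKernel with hΘ
  have hdis : γ1 ⊗ₘ Θ = γ2 := by rw [← hfst, hΘ]; exact γ2.disintegrate γ2.condKernel
  have hγfst : γ.fst = μ := hγ.1.1
  have hKdis : μ ⊗ₘ γ.condKernel = γ := by
    conv_rhs => rw [← γ.disintegrate γ.condKernel]
    rw [hγfst]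
  have hca := hγ.2 γ.condKernel inferInstance hKdis 1 le_rfl (by norm_num)
  -- sets
  have hSz : ∀ z : ℝ, MeasurableSet {v : ℝ × ℝ | v.1 ≤ z} :=
    fun z => measurableSet_le measurable_fst measurable_const
  have hTz : ∀ z : ℝ, MeasurableSet {v : ℝ × ℝ | v.2 ≤ z} :=
    fun z => measurableSet_le measurable_snd measurable_const
  -- Step B1
  have B1 : ∀ z : ℝ, (fun q => Θ q {v : ℝ × ℝ | v.1 ≤ z})
      =ᵐ[γ1] (fun q => κX q.1 (Iic z)) := by
    intro z
    have hgm : Measurable fun q : (Fin 1 → ℝ) × (Fin 1 → ℝ) => κX q.1 (Iic z) :=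
      (Kernel.measurable_coe κX measurableSet_Iic).comp measurable_fst
    refine ae_eq_of_forall_rect γ1 (Kernel.measurable_coe Θ (hSz z)) hgm
      (fun p => prob_le_one) (fun p => prob_le_one) (fun A B hA hB => ?_)
    obtain ⟨g0, hg0m, hg0ae⟩ := hca (proj 2 1 ⁻¹' B) ⟨B, hB, rfl⟩
    obtain ⟨G, hGm, hGe⟩ := factor_of_filt hg0m
    have hCx : MeasurableSet {x : Path 2 | proj 2 1 x ∈ A ∧ coord 2 1 x ≤ z} :=
      ((measurable_proj 2 1) hA).inter (measurableSet_le (measurable_coord 2 1) measurable_const)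
    -- LHS
    have hL1 : ∫⁻ q in A ×ˢ B, Θ q {v : ℝ × ℝ | v.1 ≤ z} ∂γ1
        = γ2 ((A ×ˢ B) ×ˢ {v : ℝ × ℝ | v.1 ≤ z}) := by
      rw [← hdis, Measure.compProd_apply_prod (hA.prod hB) (hSz z)]
    have hL2 : γ2 ((A ×ˢ B) ×ˢ {v : ℝ × ℝ | v.1 ≤ z})
        = γ ({x : Path 2 | proj 2 1 x ∈ A ∧ coord 2 1 x ≤ z} ×ˢ (proj 2 1 ⁻¹' B)) := by
      rw [hγ2, Measure.map_apply hFm ((hA.prod hB).prod (hSz z))]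
      congr 1
      ext p
      simp only [mem_preimage, mem_prod, mem_setOf_eq]
      tauto
    have hL3 : γ ({x : Path 2 | proj 2 1 x ∈ A ∧ coord 2 1 x ≤ z} ×ˢ (proj 2 1 ⁻¹' B))
        = ∫⁻ x in {x : Path 2 | proj 2 1 x ∈ A ∧ coord 2 1 x ≤ z},
            γ.condKernel x (proj 2 1 ⁻¹' B) ∂μ := by
      conv_lhs => rw [← hKdis]
      rw [Measure.compProd_apply_prod hCx ((measurable_proj 2 1) hB)]
    have hL4 : ∫⁻ x in {x : Path 2 | proj 2 1 x ∈ A ∧ coord 2 1 x ≤ z},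
          γ.condKernel x (proj 2 1 ⁻¹' B) ∂μ
        = ∫⁻ x in {x : Path 2 | proj 2 1 x ∈ A ∧ coord 2 1 x ≤ z}, G (proj 2 1 x) ∂μ := by
      refine setLIntegral_congr_fun_ae hCx ?_
      filter_upwards [hg0ae] with x hx _
      rw [hx, hGe x]
    have hL5 : ∫⁻ x in {x : Path 2 | proj 2 1 x ∈ A ∧ coord 2 1 x ≤ z}, G (proj 2 1 x) ∂μ
        = ∫⁻ h in A, G h * κX h (Iic z) ∂(μ.map (proj 2 1)) := by
      rw [← lintegral_indicator hCx]
      have hcomp : (fun x => ({x : Path 2 | proj 2 1 x ∈ A ∧ coord 2 1 x ≤ z}).indicator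
            (fun x => G (proj 2 1 x)) x)
          = fun x => ((A ×ˢ Iic z).indicator
            (fun w : (Fin 1 → ℝ) × ℝ => G w.1) (E2 x)) := by
        funext x
        by_cases hx : proj 2 1 x ∈ A ∧ coord 2 1 x ≤ z
        · rw [indicator_of_mem
              (show x ∈ {x : Path 2 | proj 2 1 x ∈ A ∧ coord 2 1 x ≤ z} from hx),
            indicator_of_mem (show E2 x ∈ A ×ˢ Iic z from ⟨hx.1, hx.2⟩)]
          rfl
        · rw [indicator_of_notMem
              (show x ∉ {x : Path 2 | proj 2 1 x ∈ A ∧ coord 2 1 x ≤ z} from hx),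
            indicator_of_notMem (show E2 x ∉ A ×ˢ Iic z from fun hc => hx ⟨hc.1, hc.2⟩)]
      have hind : Measurable ((A ×ˢ Iic z).indicator
          (fun w : (Fin 1 → ℝ) × ℝ => G w.1)) :=
        (hGm.comp measurable_fst).indicator (hA.prod measurableSet_Iic)
      rw [hcomp, ← lintegral_map hind E2.measurable, map_E2_eq μ,
        Measure.lintegral_compProd hind]
      rw [← lintegral_indicator hA]
      refine lintegral_congr fun h => ?_
      have hin : ∀ r : ℝ, (A ×ˢ Iic z).indicator (fun w : (Fin 1 → ℝ) × ℝ => G w.1) (h, r)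
          = (A.indicator (fun h => G h) h) * (Iic z).indicator (fun _ => 1) r := by
        intro r
        by_cases hh : h ∈ A <;> by_cases hr : r ∈ Iic z
        · rw [indicator_of_mem (show (h,r) ∈ A ×ˢ Iic z from ⟨hh, hr⟩), indicator_of_mem hh,
            indicator_of_mem hr, mul_one]
        · rw [indicator_of_notMem (fun hc => hr hc.2), indicator_of_notMem hr, mul_zero]
        · rw [indicator_of_notMem (fun hc => hh hc.1), indicator_of_notMem hh, zero_mul]
        · rw [indicator_of_notMem (fun hc => hh hc.1), indicator_of_notMem hh, zero_mul]
      simp_rw [hin]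
      rw [lintegral_const_mul _ ((measurable_indicator_const_iff 1).mpr measurableSet_Iic)]
      by_cases hh : h ∈ A
      · rw [indicator_of_mem hh, indicator_of_mem hh]
        congr 1
        rw [lintegral_indicator measurableSet_Iic]
        exact setLIntegral_one _
      · rw [indicator_of_notMem hh, indicator_of_notMem hh, zero_mul]
    -- RHS
    have hR1 : ∫⁻ q in A ×ˢ B, κX q.1 (Iic z) ∂γ1
        = ∫⁻ p in (proj 2 1 ⁻¹' A) ×ˢ (proj 2 1 ⁻¹' B), κX (proj 2 1 p.1) (Iic z) ∂γ := by
      rw [hγ1, setLIntegral_map (hA.prod hB) hgm hPm]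
      rfl
    have hgm2 : Measurable fun p : Path 2 × Path 2 => κX (proj 2 1 p.1) (Iic z) :=
      (Kernel.measurable_coe κX measurableSet_Iic).comp ((measurable_proj 2 1).comp measurable_fst)
    have hR2 : ∫⁻ p in (proj 2 1 ⁻¹' A) ×ˢ (proj 2 1 ⁻¹' B), κX (proj 2 1 p.1) (Iic z) ∂γ
        = ∫⁻ x in proj 2 1 ⁻¹' A, κX (proj 2 1 x) (Iic z) * γ.condKernel x (proj 2 1 ⁻¹' B) ∂μ := by
      conv_lhs => rw [← hKdis]
      have hf2 : Measurable fun w : Path 2 × Path 2 => κX (proj 2 1 w.1) (Iic z) := hgm2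
      rw [Measure.setLIntegral_compProd hf2 ((measurable_proj 2 1) hA) ((measurable_proj 2 1) hB)]
      refine setLIntegral_congr_fun_ae ((measurable_proj 2 1) hA) (ae_of_all _ fun x _ => ?_)
      show ∫⁻ _ in proj 2 1 ⁻¹' B, κX (proj 2 1 x) (Iic z) ∂γ.condKernel x
        = κX (proj 2 1 x) (Iic z) * γ.condKernel x (proj 2 1 ⁻¹' B)
      exact setLIntegral_const _ _
    have hR3 : ∫⁻ x in proj 2 1 ⁻¹' A, κX (proj 2 1 x) (Iic z)
          * γ.condKernel x (proj 2 1 ⁻¹' B) ∂μ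
        = ∫⁻ x in proj 2 1 ⁻¹' A, κX (proj 2 1 x) (Iic z) * G (proj 2 1 x) ∂μ := by
      refine setLIntegral_congr_fun_ae ((measurable_proj 2 1) hA) ?_
      filter_upwards [hg0ae] with x hx _
      rw [hx, hGe x]
    have hR4 : ∫⁻ x in proj 2 1 ⁻¹' A, κX (proj 2 1 x) (Iic z) * G (proj 2 1 x) ∂μ
        = ∫⁻ h in A, κX h (Iic z) * G h ∂(μ.map (proj 2 1)) := by
      have hm : Measurable fun h : Fin 1 → ℝ => κX h (Iic z) * G h :=
        (Kernel.measurable_coe κX measurableSet_Iic).mul hGm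
      rw [setLIntegral_map hA hm (measurable_proj 2 1)]
    rw [hL1, hL2, hL3, hL4, hL5, hR1, hR2, hR3, hR4]
    refine lintegral_congr fun h => mul_comm _ _
  -- swapped first-coordinate measure
  set γ1s := γ1.map Prod.swap with hγ1s
  haveI : IsProbabilityMeasure γ1s := Measure.isProbabilityMeasure_map measurable_swap.aemeasurable
  set κ2 := γ1s.condKernel with hκ2
  have hγ1s_eq : γ1s = γ.map (fun p : Path 2 × Path 2 => (proj 2 1 p.2, proj 2 1 p.1)) := by
    rw [hγ1s, hγ1, Measure.map_map measurable_swap hPm]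
    rfl
  have hfst2 : γ1s.fst = ν.map (proj 2 1) := by
    rw [hγ1s_eq]
    have h1 : (γ.map (fun p : Path 2 × Path 2 => (proj 2 1 p.2, proj 2 1 p.1))).fst
        = γ.map (fun p : Path 2 × Path 2 => proj 2 1 p.2) :=
      Measure.fst_map_prodMk ((measurable_proj 2 1).comp measurable_fst)
    have h2 : (fun p : Path 2 × Path 2 => proj 2 1 p.2) = (proj 2 1) ∘ Prod.snd := rfl
    rw [h1, h2, ← Measure.map_map (measurable_proj 2 1) measurable_snd, hγ.1.2]
  have hdis2 : γ1s.fst ⊗ₘ κ2 = γ1s := γ1s.disintegrate γ1s.condKernel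
  -- Step B2
  have B2 : ∀ z : ℝ, (fun hy => ∫⁻ hx, Θ (hx, hy) {v : ℝ × ℝ | v.2 ≤ z} ∂(κ2 hy))
      =ᵐ[ν.map (proj 2 1)] (fun hy => κY hy (Iic z)) := by
    intro z
    have hFmeas : Measurable fun w : (Fin 1 → ℝ) × (Fin 1 → ℝ)
        => Θ (w.2, w.1) {v : ℝ × ℝ | v.2 ≤ z} :=
      (Kernel.measurable_coe Θ (hTz z)).comp measurable_swap
    have hLm : Measurable fun hy => ∫⁻ hx, Θ (hx, hy) {v : ℝ × ℝ | v.2 ≤ z} ∂(κ2 hy) :=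
      Measurable.lintegral_kernel_prod_right
        (f := fun hy hx => Θ (hx, hy) {v : ℝ × ℝ | v.2 ≤ z}) hFmeas
    refine ae_eq_of_forall_setLIntegral_eq_of_sigmaFinite hLm
      (Kernel.measurable_coe κY measurableSet_Iic) (fun A hA _ => ?_)
    have e1 : ∫⁻ hy in A, ∫⁻ hx, Θ (hx, hy) {v : ℝ × ℝ | v.2 ≤ z} ∂(κ2 hy) ∂(ν.map (proj 2 1))
        = ∫⁻ w in A ×ˢ univ, Θ (w.2, w.1) {v : ℝ × ℝ | v.2 ≤ z} ∂γ1s := by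
      conv_rhs => rw [← hdis2]
      rw [Measure.setLIntegral_compProd hFmeas hA MeasurableSet.univ, hfst2]
      refine setLIntegral_congr_fun_ae hA (ae_of_all _ fun hy _ => ?_)
      rw [Measure.restrict_univ]
    have e2 : ∫⁻ w in A ×ˢ univ, Θ (w.2, w.1) {v : ℝ × ℝ | v.2 ≤ z} ∂γ1s
        = ∫⁻ q in univ ×ˢ A, Θ q {v : ℝ × ℝ | v.2 ≤ z} ∂γ1 := by
      rw [hγ1s, setLIntegral_map (hA.prod MeasurableSet.univ) hFmeas measurable_swap]
      have hsetq : Prod.swap ⁻¹' (A ×ˢ (univ : Set (Fin 1 → ℝ)))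
          = ((univ : Set (Fin 1 → ℝ)) ×ˢ A) := by
        ext q
        simp [Prod.swap]
      rw [hsetq]
      exact setLIntegral_congr_fun_ae (MeasurableSet.univ.prod hA) (ae_of_all _ fun q _ => rfl)
    have e3 : ∫⁻ q in univ ×ˢ A, Θ q {v : ℝ × ℝ | v.2 ≤ z} ∂γ1
        = γ2 ((univ ×ˢ A) ×ˢ {v : ℝ × ℝ | v.2 ≤ z}) := by
      conv_rhs => rw [← hdis]
      rw [Measure.compProd_apply_prod (MeasurableSet.univ.prod hA) (hTz z)]
    have hyset : MeasurableSet {y : Path 2 | proj 2 1 y ∈ A ∧ coord 2 1 y ≤ z} :=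
      ((measurable_proj 2 1) hA).inter (measurableSet_le (measurable_coord 2 1) measurable_const)
    have e4 : γ2 ((univ ×ˢ A) ×ˢ {v : ℝ × ℝ | v.2 ≤ z})
        = ν {y : Path 2 | proj 2 1 y ∈ A ∧ coord 2 1 y ≤ z} := by
      rw [hγ2, Measure.map_apply hFm ((MeasurableSet.univ.prod hA).prod (hTz z))]
      have hpre : (fun p : Path 2 × Path 2 => ((proj 2 1 p.1, proj 2 1 p.2),
            (coord 2 1 p.1, coord 2 1 p.2))) ⁻¹' ((univ ×ˢ A) ×ˢ {v : ℝ × ℝ | v.2 ≤ z})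
          = Prod.snd ⁻¹' {y : Path 2 | proj 2 1 y ∈ A ∧ coord 2 1 y ≤ z} := by
        ext p
        simp only [mem_preimage, mem_prod, mem_setOf_eq, mem_univ, true_and]
      rw [hpre, ← Measure.map_apply measurable_snd hyset, hγ.1.2]
    have e5 : ν {y : Path 2 | proj 2 1 y ∈ A ∧ coord 2 1 y ≤ z}
        = ∫⁻ hy in A, κY hy (Iic z) ∂(ν.map (proj 2 1)) := by
      have hEset : {y : Path 2 | proj 2 1 y ∈ A ∧ coord 2 1 y ≤ z}
          = ⇑E2 ⁻¹' (A ×ˢ Iic z) := rfl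
      rw [hEset, ← Measure.map_apply E2.measurable (hA.prod measurableSet_Iic), map_E2_eq ν,
        Measure.compProd_apply_prod hA measurableSet_Iic]
    rw [e1, e2, e3, e4, e5]
  -- joint measurability facts
  have htS : MeasurableSet {w : (((Fin 1 → ℝ) × (Fin 1 → ℝ)) × ℝ) × (ℝ × ℝ) | w.2.1 ≤ w.1.2} :=
    measurableSet_le (measurable_fst.comp measurable_snd) (measurable_snd.comp measurable_fst)
  have htT : MeasurableSet {w : (((Fin 1 → ℝ) × (Fin 1 → ℝ)) × ℝ) × (ℝ × ℝ) | w.2.2 ≤ w.1.2} :=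
    measurableSet_le (measurable_snd.comp measurable_snd) (measurable_snd.comp measurable_fst)
  have hjS : Measurable fun w : ((Fin 1 → ℝ) × (Fin 1 → ℝ)) × ℝ
      => Θ w.1 {v : ℝ × ℝ | v.1 ≤ w.2} :=
    Kernel.measurable_kernel_prodMk_left (κ := Θ.comap Prod.fst measurable_fst) htS
  have hjT : Measurable fun w : ((Fin 1 → ℝ) × (Fin 1 → ℝ)) × ℝ
      => Θ w.1 {v : ℝ × ℝ | v.2 ≤ w.2} :=
    Kernel.measurable_kernel_prodMk_left (κ := Θ.comap Prod.fst measurable_fst) htT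
  have htX : MeasurableSet {w : (((Fin 1 → ℝ) × (Fin 1 → ℝ)) × ℝ) × ℝ | w.2 ≤ w.1.2} :=
    measurableSet_le measurable_snd (measurable_snd.comp measurable_fst)
  have hjX : Measurable fun w : ((Fin 1 → ℝ) × (Fin 1 → ℝ)) × ℝ => κX w.1.1 (Iic w.2) :=
    Kernel.measurable_kernel_prodMk_left
      (κ := κX.comap (fun w : ((Fin 1 → ℝ) × (Fin 1 → ℝ)) × ℝ => w.1.1)
        (measurable_fst.fst)) htX
  have hjY : Measurable fun w : ((Fin 1 → ℝ) × (Fin 1 → ℝ)) × ℝ => κY w.1.2 (Iic w.2) :=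
    Kernel.measurable_kernel_prodMk_left
      (κ := κY.comap (fun w : ((Fin 1 → ℝ) × (Fin 1 → ℝ)) × ℝ => w.1.2)
        (measurable_fst.snd)) htX
  -- rewrite the cost through the disintegration of γ₂
  have habs2 : Measurable fun w : ((Fin 1 → ℝ) × (Fin 1 → ℝ)) × (ℝ × ℝ)
      => ENNReal.ofReal |w.2.1 - w.2.2| :=
    ENNReal.measurable_ofReal.comp ((measurable_fst.comp measurable_snd).sub
      (measurable_snd.comp measurable_snd)).abs
  have hcost1 : ∫⁻ p, ENNReal.ofReal |p.1 1 - p.2 1| ∂γ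
      = ∫⁻ w, ENNReal.ofReal |w.2.1 - w.2.2| ∂γ2 := by
    rw [hγ2, lintegral_map habs2 hFm]
    refine lintegral_congr fun p => ?_
    rw [coord21, coord21]
  have hcost2 : ∫⁻ w, ENNReal.ofReal |w.2.1 - w.2.2| ∂γ2
      = ∫⁻ q, ∫⁻ v, ENNReal.ofReal |v.1 - v.2| ∂(Θ q) ∂γ1 := by
    conv_lhs => rw [← hdis]
    rw [Measure.lintegral_compProd habs2]
  -- pointwise lower bound at fixed q
  have hstep1 : ∫⁻ q, ∫⁻ z, nnd (Θ q {v : ℝ × ℝ | v.1 ≤ z}) (Θ q {v : ℝ × ℝ | v.2 ≤ z})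
        ∂volume ∂γ1
      ≤ ∫⁻ q, ∫⁻ v, ENNReal.ofReal |v.1 - v.2| ∂(Θ q) ∂γ1 := by
    refine lintegral_mono fun q => ?_
    rw [lintegral_abs_eq (Θ q) measurable_fst measurable_snd]
    refine lintegral_mono fun z => ?_
    exact nnd_measure_le (Θ q) z
  -- Tonelli swaps
  have hnndm : Measurable fun w : ((Fin 1 → ℝ) × (Fin 1 → ℝ)) × ℝ
      => nnd (Θ w.1 {v : ℝ × ℝ | v.1 ≤ w.2}) (Θ w.1 {v : ℝ × ℝ | v.2 ≤ w.2}) :=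
    (hjS.sub hjT).add (hjT.sub hjS)
  have hswap1 : ∫⁻ q, ∫⁻ z, nnd (Θ q {v : ℝ × ℝ | v.1 ≤ z}) (Θ q {v : ℝ × ℝ | v.2 ≤ z})
        ∂volume ∂γ1
      = ∫⁻ z, ∫⁻ q, nnd (Θ q {v : ℝ × ℝ | v.1 ≤ z}) (Θ q {v : ℝ × ℝ | v.2 ≤ z}) ∂γ1 ∂volume :=
    lintegral_lintegral_swap hnndm.aemeasurable
  have hnndm2 : Measurable fun w : ((Fin 1 → ℝ) × (Fin 1 → ℝ)) × ℝ
      => nnd (κX w.1.1 (Iic w.2)) (κY w.1.2 (Iic w.2)) :=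
    (hjX.sub hjY).add (hjY.sub hjX)
  have hswap2 : ∫⁻ q, ∫⁻ z, nnd (κX q.1 (Iic z)) (κY q.2 (Iic z)) ∂volume ∂γ1
      = ∫⁻ z, ∫⁻ q, nnd (κX q.1 (Iic z)) (κY q.2 (Iic z)) ∂γ1 ∂volume :=
    lintegral_lintegral_swap hnndm2.aemeasurable
  -- comparison at fixed z
  have hz : ∀ z : ℝ, ∫⁻ q, nnd (κX q.1 (Iic z)) (κY q.2 (Iic z)) ∂γ1
      ≤ ∫⁻ q, nnd (Θ q {v : ℝ × ℝ | v.1 ≤ z}) (Θ q {v : ℝ × ℝ | v.2 ≤ z}) ∂γ1 := by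
    intro z
    have haX : Measurable fun q : (Fin 1 → ℝ) × (Fin 1 → ℝ) => κX q.1 (Iic z) :=
      (Kernel.measurable_coe κX measurableSet_Iic).comp measurable_fst
    have haY : Measurable fun q : (Fin 1 → ℝ) × (Fin 1 → ℝ) => κY q.2 (Iic z) :=
      (Kernel.measurable_coe κY measurableSet_Iic).comp measurable_snd
    have hTm : Measurable fun q : (Fin 1 → ℝ) × (Fin 1 → ℝ)
        => Θ q {v : ℝ × ℝ | v.2 ≤ z} := Kernel.measurable_coe Θ (hTz z)
    have h1 : ∫⁻ q, nnd (Θ q {v : ℝ × ℝ | v.1 ≤ z}) (Θ q {v : ℝ × ℝ | v.2 ≤ z}) ∂γ1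
        = ∫⁻ q, nnd (κX q.1 (Iic z)) (Θ q {v : ℝ × ℝ | v.2 ≤ z}) ∂γ1 := by
      refine lintegral_congr_ae ?_
      filter_upwards [B1 z] with q hq
      rw [nnd, nnd, hq]
    rw [h1]
    have hmix : ∀ F : ((Fin 1 → ℝ) × (Fin 1 → ℝ)) → ℝ≥0∞, Measurable F →
        ∫⁻ q, F q ∂γ1 = ∫⁻ hy, ∫⁻ hx, F (hx, hy) ∂(κ2 hy) ∂(ν.map (proj 2 1)) := by
      intro F hF
      have hG : Measurable fun w : (Fin 1 → ℝ) × (Fin 1 → ℝ) => F (w.2, w.1) :=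
        hF.comp measurable_swap
      have h2 : ∫⁻ q, F q ∂γ1 = ∫⁻ w, F (w.2, w.1) ∂γ1s := by
        rw [hγ1s, lintegral_map hG measurable_swap]
        exact lintegral_congr fun q => rfl
      rw [h2]
      conv_lhs => rw [← hdis2]
      rw [Measure.lintegral_compProd hG, hfst2]
    rw [hmix (fun q => nnd (κX q.1 (Iic z)) (Θ q {v : ℝ × ℝ | v.2 ≤ z}))
        ((haX.sub hTm).add (hTm.sub haX)),
      hmix (fun q => nnd (κX q.1 (Iic z)) (κY q.2 (Iic z)))
        ((haX.sub haY).add (haY.sub haX))]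
    refine lintegral_mono_ae ?_
    filter_upwards [B2 z] with hy hB2
    have hbound : ∫⁻ hx, κX hx (Iic z) ∂(κ2 hy) ≠ ⊤ := by
      refine ne_top_of_le_ne_top (by simp : (1 : ℝ≥0∞) ≠ ⊤) ?_
      calc ∫⁻ hx, κX hx (Iic z) ∂(κ2 hy) ≤ ∫⁻ _, 1 ∂(κ2 hy) :=
            lintegral_mono fun hx => prob_le_one
        _ = 1 := by rw [lintegral_one, measure_univ]
    show ∫⁻ hx, nnd (κX hx (Iic z)) (κY hy (Iic z)) ∂(κ2 hy)
      ≤ ∫⁻ hx, nnd (κX hx (Iic z)) (Θ (hx, hy) {v : ℝ × ℝ | v.2 ≤ z}) ∂(κ2 hy)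
    set b := κY hy (Iic z) with hbdef
    have hbne : b ≠ ⊤ := measure_ne_top _ _
    have hmm : Measurable fun hx : Fin 1 → ℝ => Θ (hx, hy) {v : ℝ × ℝ | v.2 ≤ z} :=
      (Kernel.measurable_coe Θ (hTz z)).comp (measurable_id.prodMk measurable_const)
    rcases hcdf z (hy 0) with hcase | hcase
    · have hble : ∀ hx : Fin 1 → ℝ, b ≤ κX hx (Iic z) := by
        intro hx
        have h := hcase (hx 0)
        rwa [hist_eq, hist_eq] at h
      have eR : ∫⁻ hx, nnd (κX hx (Iic z)) b ∂(κ2 hy)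
          = (∫⁻ hx, κX hx (Iic z) ∂(κ2 hy)) - b := by
        calc ∫⁻ hx, nnd (κX hx (Iic z)) b ∂(κ2 hy)
            = ∫⁻ hx, κX hx (Iic z) - b ∂(κ2 hy) :=
              lintegral_congr fun hx => nnd_of_le (hble hx)
          _ = (∫⁻ hx, κX hx (Iic z) ∂(κ2 hy)) - ∫⁻ _, b ∂(κ2 hy) :=
              lintegral_sub measurable_const
                (by rw [lintegral_const, measure_univ, mul_one]; exact hbne)
                (ae_of_all _ hble)
          _ = (∫⁻ hx, κX hx (Iic z) ∂(κ2 hy)) - b := by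
              rw [lintegral_const, measure_univ, mul_one]
      rw [eR]
      calc (∫⁻ hx, κX hx (Iic z) ∂(κ2 hy)) - b
          = (∫⁻ hx, κX hx (Iic z) ∂(κ2 hy))
            - ∫⁻ hx, Θ (hx, hy) {v : ℝ × ℝ | v.2 ≤ z} ∂(κ2 hy) := by rw [hB2]
        _ ≤ ∫⁻ hx, κX hx (Iic z) - Θ (hx, hy) {v : ℝ × ℝ | v.2 ≤ z} ∂(κ2 hy) :=
            lintegral_tsub_ge _ hmm
        _ ≤ ∫⁻ hx, nnd (κX hx (Iic z)) (Θ (hx, hy) {v : ℝ × ℝ | v.2 ≤ z}) ∂(κ2 hy) :=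
            lintegral_mono fun hx => le_self_add
    · have hble : ∀ hx : Fin 1 → ℝ, κX hx (Iic z) ≤ b := by
        intro hx
        have h := hcase (hx 0)
        rwa [hist_eq, hist_eq] at h
      have eR : ∫⁻ hx, nnd (κX hx (Iic z)) b ∂(κ2 hy)
          = b - ∫⁻ hx, κX hx (Iic z) ∂(κ2 hy) := by
        calc ∫⁻ hx, nnd (κX hx (Iic z)) b ∂(κ2 hy)
            = ∫⁻ hx, b - κX hx (Iic z) ∂(κ2 hy) :=
              lintegral_congr fun hx => nnd_of_ge (hble hx)
          _ = (∫⁻ _, b ∂(κ2 hy)) - ∫⁻ hx, κX hx (Iic z) ∂(κ2 hy) :=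
              lintegral_sub
                ((Kernel.measurable_coe κX measurableSet_Iic).comp
                  (measurable_id : Measurable fun hx : Fin 1 → ℝ => hx))
                hbound (ae_of_all _ hble)
          _ = b - ∫⁻ hx, κX hx (Iic z) ∂(κ2 hy) := by
              rw [lintegral_const, measure_univ, mul_one]
      rw [eR]
      calc b - ∫⁻ hx, κX hx (Iic z) ∂(κ2 hy)
          = (∫⁻ hx, Θ (hx, hy) {v : ℝ × ℝ | v.2 ≤ z} ∂(κ2 hy))
            - ∫⁻ hx, κX hx (Iic z) ∂(κ2 hy) := by rw [hB2]
        _ ≤ ∫⁻ hx, Θ (hx, hy) {v : ℝ × ℝ | v.2 ≤ z} - κX hx (Iic z) ∂(κ2 hy) :=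
            lintegral_tsub_ge _ ((Kernel.measurable_coe κX measurableSet_Iic).comp
              (measurable_id : Measurable fun hx : Fin 1 → ℝ => hx))
        _ ≤ ∫⁻ hx, nnd (κX hx (Iic z)) (Θ (hx, hy) {v : ℝ × ℝ | v.2 ≤ z}) ∂(κ2 hy) :=
            lintegral_mono fun hx => le_add_self
  -- assemble
  calc ∫⁻ q, ∫⁻ z, nnd (κX q.1 (Iic z)) (κY q.2 (Iic z)) ∂volume ∂γ1
      = ∫⁻ z, ∫⁻ q, nnd (κX q.1 (Iic z)) (κY q.2 (Iic z)) ∂γ1 ∂volume := hswap2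
    _ ≤ ∫⁻ z, ∫⁻ q, nnd (Θ q {v : ℝ × ℝ | v.1 ≤ z}) (Θ q {v : ℝ × ℝ | v.2 ≤ z}) ∂γ1 ∂volume :=
        lintegral_mono fun z => hz z
    _ = ∫⁻ q, ∫⁻ z, nnd (Θ q {v : ℝ × ℝ | v.1 ≤ z}) (Θ q {v : ℝ × ℝ | v.2 ≤ z}) ∂volume ∂γ1 :=
        hswap1.symm
    _ ≤ ∫⁻ q, ∫⁻ v, ENNReal.ofReal |v.1 - v.2| ∂(Θ q) ∂γ1 := hstep1
    _ = ∫⁻ p, ENNReal.ofReal |p.1 1 - p.2 1| ∂γ := by rw [← hcost2, ← hcost1]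

end LowerBound


section Main

variable (μ ν : Measure (Path 2)) [IsProbabilityMeasure μ] [IsProbabilityMeasure ν]

lemma exists_bicausal_le (c1 : ℝ → ℝ → ℝ≥0∞)
    (hc1m : Measurable (fun q : ℝ × ℝ => c1 q.1 q.2))
    (hcdf : ∀ z y1 : ℝ,
      (∀ x1 : ℝ, nextK 2 ν 1 ![y1] (Iic z) ≤ nextK 2 μ 1 ![x1] (Iic z)) ∨
      (∀ x1 : ℝ, nextK 2 μ 1 ![x1] (Iic z) ≤ nextK 2 ν 1 ![y1] (Iic z)))
    (γ : Measure (Path 2 × Path 2)) (hγ : IsCausal 2 μ ν γ) :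
    ∃ γ' : Measure (Path 2 × Path 2), IsBicausal 2 μ ν γ' ∧
      ∫⁻ p, c1 (p.1 0) (p.2 0) + ENNReal.ofReal |p.1 1 - p.2 1| ∂γ'
        ≤ ∫⁻ p, c1 (p.1 0) (p.2 0) + ENNReal.ofReal |p.1 1 - p.2 1| ∂γ := by
  classical
  haveI : IsProbabilityMeasure γ := by
    constructor
    rw [← preimage_univ (f := @Prod.fst (Path 2) (Path 2)),
      ← Measure.map_apply measurable_fst MeasurableSet.univ, hγ.1.1, measure_univ]
  haveI hKmX : IsMarkovKernel (nextK 2 μ 1) := markov_nextK μ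
  haveI hKmY : IsMarkovKernel (nextK 2 ν 1) := markov_nextK ν
  have hPm : Measurable (fun p : Path 2 × Path 2 => (proj 2 1 p.1, proj 2 1 p.2)) :=
    ((measurable_proj 2 1).comp measurable_fst).prodMk ((measurable_proj 2 1).comp measurable_snd)
  set γ1 := γ.map (fun p : Path 2 × Path 2 => (proj 2 1 p.1, proj 2 1 p.2)) with hγ1
  haveI : IsProbabilityMeasure γ1 := Measure.isProbabilityMeasure_map hPm.aemeasurable
  have hσ1 : γ1.map Prod.fst = μ.map (proj 2 1) := by
    rw [hγ1, Measure.map_map measurable_fst hPm]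
    have h2 : (Prod.fst ∘ fun p : Path 2 × Path 2 => (proj 2 1 p.1, proj 2 1 p.2))
        = (proj 2 1) ∘ Prod.fst := rfl
    rw [h2, ← Measure.map_map (measurable_proj 2 1) measurable_fst, hγ.1.1]
  have hσ2 : γ1.map Prod.snd = ν.map (proj 2 1) := by
    rw [hγ1, Measure.map_map measurable_snd hPm]
    have h2 : (Prod.snd ∘ fun p : Path 2 × Path 2 => (proj 2 1 p.1, proj 2 1 p.2))
        = (proj 2 1) ∘ Prod.snd := rfl
    rw [h2, ← Measure.map_map (measurable_proj 2 1) measurable_snd, hγ.1.2]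
  refine ⟨constr γ1 (nextK 2 μ 1) (nextK 2 ν 1),
    isBicausal_constr μ ν γ1 _ _ hσ1 hσ2 (map_E2_eq μ) (map_E2_eq ν), ?_⟩
  rw [constr_cost γ1 _ _ c1 hc1m]
  have hpair : Measurable fun p : Path 2 × Path 2 => ((p.1 0 : ℝ), (p.2 0 : ℝ)) :=
    ((measurable_pi_apply 0).comp measurable_fst).prodMk
      ((measurable_pi_apply 0).comp measurable_snd)
  have h1m : Measurable fun p : Path 2 × Path 2 => c1 (p.1 0) (p.2 0) := hc1m.comp hpair
  have hsplit : ∫⁻ p, c1 (p.1 0) (p.2 0) + ENNReal.ofReal |p.1 1 - p.2 1| ∂γ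
      = (∫⁻ p, c1 (p.1 0) (p.2 0) ∂γ) + ∫⁻ p, ENNReal.ofReal |p.1 1 - p.2 1| ∂γ :=
    lintegral_add_left h1m _
  rw [hsplit]
  refine add_le_add ?_ ?_
  · have hqpair : Measurable fun q : (Fin 1 → ℝ) × (Fin 1 → ℝ) => ((q.1 0 : ℝ), (q.2 0 : ℝ)) :=
      ((measurable_pi_apply 0).comp measurable_fst).prodMk
        ((measurable_pi_apply 0).comp measurable_snd)
    have hc1' : Measurable fun q : (Fin 1 → ℝ) × (Fin 1 → ℝ) => c1 (q.1 0) (q.2 0) :=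
      hc1m.comp hqpair
    rw [hγ1, lintegral_map hc1' hPm]
    refine le_of_eq (lintegral_congr fun p => ?_)
    show c1 ((proj 2 1 p.1) 0) ((proj 2 1 p.2) 0) = c1 (p.1 0) (p.2 0)
    rw [proj21_apply, proj21_apply]
  · exact causal_cost_ge μ ν hcdf γ hγ

end Main

theorem causal_equals_bicausal_two_steps
    (μ ν : Measure (Path 2)) [IsProbabilityMeasure μ] [IsProbabilityMeasure ν]
    (c1 : ℝ → ℝ → ℝ≥0∞)
    (hc1 : LowerSemicontinuous (fun q : ℝ × ℝ => c1 q.1 q.2))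
    (hcdf : ∀ z y1 : ℝ,
      (∀ x1 : ℝ, nextK 2 ν 1 ![y1] (Iic z) ≤ nextK 2 μ 1 ![x1] (Iic z)) ∨
      (∀ x1 : ℝ, nextK 2 μ 1 ![x1] (Iic z) ≤ nextK 2 ν 1 ![y1] (Iic z))) :
    (⨅ (γ : Measure (Path 2 × Path 2)) (_ : IsCausal 2 μ ν γ),
        ∫⁻ p, c1 (p.1 0) (p.2 0) + ENNReal.ofReal |p.1 1 - p.2 1| ∂γ)
      = ⨅ (γ : Measure (Path 2 × Path 2)) (_ : IsBicausal 2 μ ν γ),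
          ∫⁻ p, c1 (p.1 0) (p.2 0) + ENNReal.ofReal |p.1 1 - p.2 1| ∂γ := by
  have hc1m : Measurable (fun q : ℝ × ℝ => c1 q.1 q.2) := hc1.measurable
  refine le_antisymm ?_ ?_
  · exact le_iInf fun γ => le_iInf fun hγ => iInf₂_le γ hγ.1
  · refine le_iInf fun γ => le_iInf fun hγ => ?_
    obtain ⟨γ', hγ', hle⟩ := exists_bicausal_le μ ν c1 hc1m hcdf γ hγ
    exact le_trans (iInf₂_le γ' hγ') hle

end CausalTransport
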